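/- arXiv:2502.09559 — 9 statements merged into one kernel-verified Lean document; each statement's English description precedes it below -/
import Mathlib

section
/- Let a = [a_1,...,a_d] be a strictly increasing tuple of positive integers with a ≠ [1,2,...,d]. Define m(a) = max{a_j - 2j : a_j > j}. Then the maximum m(a) is attained at some index j such that either j = 1, or a_{j-1} < a_j - 1 (i.e., j is the first index of a block of consecutive entries with a_j > j). -/
/-- For a strictly increasing tuple `a ≠ [1,...,d]` of positive integers, the maximum
`m(a) = max {a_j - 2j : a_j > j}` is attained at an index `j` which is either the first
index, or satisfies `a_{j-1} < a_j - 1`, i.e. `j` is the first index of a maximal block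
of consecutive entries with `a_j > j`. (0-based indexing: the entry at 0-based index `j`
occupies 1-based position `j+1`.) -/
theorem stmt_4 (d : ℕ) (a : Fin d → ℕ) (ha : StrictMono a) (hpos : ∀ i, 1 ≤ a i)
    (hne : a ≠ fun (i : Fin d) => (i : ℕ) + 1) :
    ∃ j : Fin d, (j : ℕ) + 1 < a j ∧
      IsGreatest {x : ℤ | ∃ l : Fin d, (l : ℕ) + 1 < a l ∧ x = (a l : ℤ) - 2 * ((l : ℕ) + 1)}
        ((a j : ℤ) - 2 * ((j : ℕ) + 1)) ∧
      ((j : ℕ) = 0 ∨ ∀ l : Fin d, (l : ℕ) + 1 = (j : ℕ) → a l + 1 < a j) := by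
  have key : ∀ n : ℕ, ∀ i : Fin d, (i : ℕ) = n → n + 1 ≤ a i := by
    intro n
    induction n with
    | zero => intro i _; exact hpos i
    | succ n ih =>
      intro i hi
      have hn : n < d := by omega
      have h1 : (⟨n, hn⟩ : Fin d) < i := by simp [Fin.lt_def]; omega
      have := ha h1
      have := ih ⟨n, hn⟩ rfl
      omega
  have key' : ∀ i : Fin d, (i : ℕ) + 1 ≤ a i := fun i => key i i rfl
  obtain ⟨i0, hi0⟩ : ∃ i : Fin d, (i : ℕ) + 1 < a i := by
    by_contra h
    push_neg at h
    apply hne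
    funext i
    exact le_antisymm (h i) (key' i)
  set S : Finset (Fin d) := Finset.univ.filter (fun l => (l : ℕ) + 1 < a l) with hSdef
  have hS : S.Nonempty := ⟨i0, by simp [hSdef, hi0]⟩
  obtain ⟨j, hjS, hmax⟩ := S.exists_max_image (fun l => (a l : ℤ) - 2 * ((l : ℕ) + 1)) hS
  have hj : (j : ℕ) + 1 < a j := by simpa [hSdef] using hjS
  refine ⟨j, hj, ⟨⟨j, hj, rfl⟩, ?_⟩, ?_⟩
  · rintro x ⟨l, hl, rfl⟩
    exact hmax l (by simp [hSdef, hl])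
  · by_cases h0 : (j : ℕ) = 0
    · exact Or.inl h0
    · refine Or.inr fun l hl => ?_
      by_contra hcon
      push_neg at hcon
      have hlt : l < j := by rw [Fin.lt_def]; omega
      have h1 : a l < a j := ha hlt
      have h2 : a l = a j - 1 := by omega
      have hlmem : (l : ℕ) + 1 < a l := by omega
      have hle := hmax l (by simp [hSdef, hlmem])
      omega
end

section
/- Let step be the function on strictly increasing d-tuples of positive integers defined by step(a)_j = a_j - 1 if (j = 1 and a_1 > 1) or (j > 1 and a_j > a_{j-1} + 1), and step(a)_j = a_j otherwise. For a ≠ [1,2,...,d] with m(a) = max{a_j - 2j : a_j > j}, if step(a) ≠ [1,2,...,d] then m(step(a)) = m(a) - 1. -/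
/-- The step function: decrease by 1 each entry which is the first entry of a maximal
block of consecutive integers, provided this preserves positivity and strict increase;
i.e. `step(a)_j = a_j - 1` if (`j = 1` and `a_1 > 1`) or (`j > 1` and `a_j > a_{j-1} + 1`),
and `step(a)_j = a_j` otherwise (0-based indexing). -/
def stepFn (d : ℕ) (a : Fin d → ℕ) : Fin d → ℕ := fun j =>
  if ((j : ℕ) = 0 ∧ 1 < a j) ∨
      (0 < (j : ℕ) ∧ a ⟨(j : ℕ) - 1, Nat.lt_of_le_of_lt (Nat.sub_le _ _) j.2⟩ + 1 < a j)
  then a j - 1 else a j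

theorem step_eq_pos (d : ℕ) (a : Fin d → ℕ) (j : Fin d)
    (h : ((j : ℕ) = 0 ∧ 1 < a j) ∨
      (0 < (j : ℕ) ∧ a ⟨(j : ℕ) - 1, Nat.lt_of_le_of_lt (Nat.sub_le _ _) j.2⟩ + 1 < a j)) :
    stepFn d a j = a j - 1 := if_pos h

theorem step_eq_neg (d : ℕ) (a : Fin d → ℕ) (j : Fin d)
    (h : ¬ (((j : ℕ) = 0 ∧ 1 < a j) ∨
      (0 < (j : ℕ) ∧ a ⟨(j : ℕ) - 1, Nat.lt_of_le_of_lt (Nat.sub_le _ _) j.2⟩ + 1 < a j))) :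
    stepFn d a j = a j := if_neg h

/-- If `a ≠ [1,...,d]` and `step(a) ≠ [1,...,d]`, then `m(step(a)) = m(a) - 1`,
where `m(b) = max {b_j - 2j : b_j > j}` (0-based indexing, position of index `j` is `j+1`). -/
theorem stmt_6 (d : ℕ) (a : Fin d → ℕ) (ha : StrictMono a) (hpos : ∀ i, 1 ≤ a i)
    (hne : a ≠ fun i : Fin d => (i : ℕ) + 1)
    (hne' : stepFn d a ≠ fun i : Fin d => (i : ℕ) + 1)
    (M : ℤ)
    (hM : IsGreatest {x : ℤ | ∃ j : Fin d, (j : ℕ) + 1 < a j ∧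
      x = (a j : ℤ) - 2 * ((j : ℕ) + 1)} M) :
    IsGreatest {x : ℤ | ∃ j : Fin d, (j : ℕ) + 1 < stepFn d a j ∧
      x = (stepFn d a j : ℤ) - 2 * ((j : ℕ) + 1)} (M - 1) := by
  classical
  obtain ⟨⟨j0, hj0a, hj0v⟩, hub'⟩ := hM
  have hub : ∀ k : Fin d, (k : ℕ) + 1 < a k →
      (a k : ℤ) - 2 * ((k : ℕ) + 1) ≤ M := fun k hk => hub' ⟨k, hk, rfl⟩
  -- lower bound: a k ≥ k + 1
  have hlow0 : ∀ n (h : n < d), n + 1 ≤ a ⟨n, h⟩ := by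
    intro n
    induction n with
    | zero => intro h; exact hpos _
    | succ k ih =>
      intro h
      have h1 : k < d := Nat.lt_of_succ_lt h
      have h2 := ih h1
      have h3 : a ⟨k, h1⟩ < a ⟨k + 1, h⟩ := ha (by simp [Fin.lt_def])
      omega
  have hlow : ∀ k : Fin d, (k : ℕ) + 1 ≤ a k := fun k => hlow0 k.val k.2
  -- upper bound part
  have hUB : ∀ k : Fin d, (k : ℕ) + 1 < stepFn d a k →
      (stepFn d a k : ℤ) - 2 * ((k : ℕ) + 1) ≤ M - 1 := by
    intro k hk
    by_cases hc : ((k : ℕ) = 0 ∧ 1 < a k) ∨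
      (0 < (k : ℕ) ∧ a ⟨(k : ℕ) - 1, Nat.lt_of_le_of_lt (Nat.sub_le _ _) k.2⟩ + 1 < a k)
    · rw [step_eq_pos d a k hc] at hk ⊢
      have h1 : 1 ≤ a k := hpos k
      have h2 : (k : ℕ) + 1 < a k := by omega
      have h3 := hub k h2
      omega
    · rw [step_eq_neg d a k hc] at hk ⊢
      push_neg at hc
      obtain ⟨hc1, hc2⟩ := hc
      have hk0 : 0 < (k : ℕ) := by
        rcases Nat.eq_zero_or_pos (k : ℕ) with h | h
        · have := hc1 h; omega
        · exact h
      set kp : Fin d := ⟨(k : ℕ) - 1, Nat.lt_of_le_of_lt (Nat.sub_le _ _) k.2⟩ with hkpdef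
      have hv : (kp : ℕ) = (k : ℕ) - 1 := rfl
      have hmono : a kp < a k := ha (by rw [Fin.lt_def, hv]; omega)
      have heq : a k = a kp + 1 := by have := hc2 hk0; omega
      have hcond : (kp : ℕ) + 1 < a kp := by omega
      have h3 := hub kp hcond
      omega
  constructor
  · -- membership: a witness attaining M - 1
    -- first, the maximizer j0 is a block start
    have hbs : ((j0 : ℕ) = 0 ∧ 1 < a j0) ∨
        (0 < (j0 : ℕ) ∧ a ⟨(j0 : ℕ) - 1, Nat.lt_of_le_of_lt (Nat.sub_le _ _) j0.2⟩ + 1 < a j0) := by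
      rcases Nat.eq_zero_or_pos (j0 : ℕ) with h0 | h0
      · exact Or.inl ⟨h0, by omega⟩
      · refine Or.inr ⟨h0, ?_⟩
        set jp : Fin d := ⟨(j0 : ℕ) - 1, Nat.lt_of_le_of_lt (Nat.sub_le _ _) j0.2⟩ with hjpdef
        have hv : (jp : ℕ) = (j0 : ℕ) - 1 := rfl
        have hmono : a jp < a j0 := ha (by rw [Fin.lt_def, hv]; omega)
        by_contra hcon
        push_neg at hcon
        have heq : a j0 = a jp + 1 := by omega
        have hcond : (jp : ℕ) + 1 < a jp := by omega
        have h3 := hub jp hcond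
        omega
    by_cases h1 : (j0 : ℕ) + 2 < a j0
    · refine ⟨j0, ?_, ?_⟩
      · rw [step_eq_pos d a j0 hbs]; omega
      · rw [step_eq_pos d a j0 hbs]
        have : 1 ≤ a j0 := hpos j0
        omega
    · have haj0 : a j0 = (j0 : ℕ) + 2 := by omega
      by_cases h2 : (j0 : ℕ) + 1 < d
      · set j1 : Fin d := ⟨(j0 : ℕ) + 1, h2⟩ with hj1def
        have hv1 : (j1 : ℕ) = (j0 : ℕ) + 1 := rfl
        have hm01 : a j0 < a j1 := ha (by rw [Fin.lt_def, hv1]; omega)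
        have hidx : (⟨(j1 : ℕ) - 1, Nat.lt_of_le_of_lt (Nat.sub_le _ _) j1.2⟩ : Fin d) = j0 := by
          apply Fin.val_injective
          show (j1 : ℕ) - 1 = (j0 : ℕ)
          omega
        have hstep1 : stepFn d a j1 = (j0 : ℕ) + 3 := by
          by_cases h3 : a j1 = (j0 : ℕ) + 3
          · rw [step_eq_neg d a j1 ?_, h3]
            rintro (⟨hz, -⟩ | ⟨-, hlt⟩)
            · omega
            · rw [hidx] at hlt; omega
          · have h4 : (j1 : ℕ) + 1 < a j1 := by omega
            have h5 := hub j1 h4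
            have h6 : a j1 = (j0 : ℕ) + 4 := by omega
            rw [step_eq_pos d a j1 (Or.inr ⟨by omega, by rw [hidx]; omega⟩)]
            omega
        refine ⟨j1, ?_, ?_⟩
        · rw [hstep1]; omega
        · rw [hstep1]; omega
      · -- j0 is the last index; then step(a) = identity, contradiction
        exfalso
        have hd : (j0 : ℕ) + 1 = d := by have := j0.2; omega
        have hsmall : ∀ k : Fin d, (k : ℕ) < (j0 : ℕ) → a k = (k : ℕ) + 1 := by
          intro k hk
          by_contra hcon
          have hk1 : (k : ℕ) + 1 < a k := by have := hlow k; omega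
          have := hub k hk1
          omega
        apply hne'
        funext k
        rcases Nat.lt_or_ge (k : ℕ) (j0 : ℕ) with hk | hk
        · rw [step_eq_neg d a k ?_, hsmall k hk]
          rintro (⟨hz, hgt⟩ | ⟨hp, hlt⟩)
          · have := hsmall k hk; omega
          · set kp : Fin d := ⟨(k : ℕ) - 1, Nat.lt_of_le_of_lt (Nat.sub_le _ _) k.2⟩ with hkpdef
            have hv : (kp : ℕ) = (k : ℕ) - 1 := rfl
            have e1 : a kp = (kp : ℕ) + 1 := hsmall kp (by omega)
            have e2 : a k = (k : ℕ) + 1 := hsmall k hk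
            omega
        · have hkj : k = j0 := Fin.val_injective (by have := k.2; omega)
          rw [hkj, step_eq_pos d a j0 hbs]
          omega
  · rintro x ⟨k, hk1, hk2⟩
    rw [hk2]
    exact hUB k hk1
end

section
/- Let a = [a_1,...,a_d] be a strictly increasing tuple of positive integers with a ≠ [1,2,...,d], and let τ(a) be the number of elements in the chain a = a^(1), a^(2), ..., a^(τ(a)) = [1,2,...,d] obtained by iterating the step function (which decreases by 1 each entry a_j with j=1, a_1>1, or j>1, a_j > a_{j-1}+1). Then τ(a) = m(a) + d + 1, where m(a) = max{a_j - 2j : a_j > j}. -/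
namespace Stmt7

variable {d : ℕ}

def dcond (d : ℕ) (a : Fin d → ℕ) (j : Fin d) : Prop :=
  ((j : ℕ) = 0 ∧ 1 < a j) ∨
    (0 < (j : ℕ) ∧ a ⟨(j : ℕ) - 1, Nat.lt_of_le_of_lt (Nat.sub_le _ _) j.2⟩ + 1 < a j)

instance (a : Fin d → ℕ) (j : Fin d) : Decidable (dcond d a j) := by
  unfold dcond; infer_instance

lemma step_pos {a : Fin d → ℕ} {j : Fin d} (h : dcond d a j) :
    stepFn d a j = a j - 1 := by
  unfold stepFn; exact if_pos h

lemma step_neg {a : Fin d → ℕ} {j : Fin d} (h : ¬ dcond d a j) :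
    stepFn d a j = a j := by
  unfold stepFn; exact if_neg h

lemma dcond_zero {a : Fin d → ℕ} {j : Fin d} (hj : (j : ℕ) = 0) :
    dcond d a j ↔ 1 < a j := by
  constructor
  · rintro (⟨_, h⟩ | ⟨h0, _⟩)
    · exact h
    · omega
  · intro h
    exact Or.inl ⟨hj, h⟩

lemma dcond_pos {a : Fin d → ℕ} {j : Fin d} (hj : 0 < (j : ℕ)) :
    dcond d a j ↔ a ⟨(j : ℕ) - 1, Nat.lt_of_le_of_lt (Nat.sub_le _ _) j.2⟩ + 1 < a j := by
  constructor
  · rintro (⟨h0, _⟩ | ⟨_, h⟩)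
    · omega
    · exact h
  · intro h
    exact Or.inr ⟨hj, h⟩

lemma strictMono_of_adj {f : Fin d → ℕ}
    (h : ∀ (n : ℕ) (hn : n + 1 < d), f ⟨n, by omega⟩ < f ⟨n + 1, hn⟩) : StrictMono f := by
  intro i j hij
  obtain ⟨m, hm⟩ := j
  obtain ⟨n, hn⟩ := i
  rw [Fin.lt_def] at hij
  simp only at hij
  induction m with
  | zero => omega
  | succ m ih =>
    rcases Nat.lt_succ_iff_lt_or_eq.mp hij with h' | h'
    · exact lt_trans (ih (by omega) h') (h m hm)
    · subst h'
      exact h n hm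

lemma ge_of_mono {a : Fin d → ℕ} (ha : StrictMono a) (hpos : ∀ i, 1 ≤ a i) :
    ∀ j : Fin d, (j : ℕ) + 1 ≤ a j := by
  have key : ∀ n (hn : n < d), n + 1 ≤ a ⟨n, hn⟩ := by
    intro n
    induction n with
    | zero => intro hn; exact hpos _
    | succ n ih =>
      intro hn
      have h' : n < d := by omega
      have h2 := ih h'
      have h1 : a ⟨n, h'⟩ < a ⟨n + 1, hn⟩ := ha (Fin.mk_lt_mk.mpr (by omega))
      omega
  intro j
  have := key j.val j.2
  have hv : (⟨j.val, j.2⟩ : Fin d) = j := rfl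
  rwa [hv] at this

lemma step_ge {a : Fin d → ℕ} (hge : ∀ j : Fin d, (j : ℕ) + 1 ≤ a j) :
    ∀ j : Fin d, (j : ℕ) + 1 ≤ stepFn d a j := by
  intro j
  by_cases h : dcond d a j
  · rw [step_pos h]
    rcases h with ⟨h0, h1⟩ | ⟨h0, h1⟩
    · omega
    · have h2 := hge ⟨(j : ℕ) - 1, Nat.lt_of_le_of_lt (Nat.sub_le _ _) j.2⟩
      have h2' : (j : ℕ) - 1 + 1 ≤ a ⟨(j : ℕ) - 1, Nat.lt_of_le_of_lt (Nat.sub_le _ _) j.2⟩ :=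
        h2
      omega
  · rw [step_neg h]
    exact hge j

lemma step_mono {a : Fin d → ℕ} (ha : StrictMono a) : StrictMono (stepFn d a) := by
  apply strictMono_of_adj
  intro n hn
  have hnd : n < d := by omega
  set i : Fin d := ⟨n, hnd⟩ with hi
  set j : Fin d := ⟨n + 1, hn⟩ with hj
  have hadj : a i < a j := ha (Fin.mk_lt_mk.mpr (by omega))
  have h1 : stepFn d a i ≤ a i := by
    by_cases h : dcond d a i
    · rw [step_pos h]; omega
    · rw [step_neg h]
  have hgoal : stepFn d a i ≤ a i → stepFn d a i < stepFn d a j := by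
    intro _
    by_cases h : dcond d a j
    · rw [step_pos h]
      rw [dcond_pos (by simp [hj])] at h
      have hprev : a ⟨(j : ℕ) - 1, Nat.lt_of_le_of_lt (Nat.sub_le _ _) j.2⟩ = a i := rfl
      rw [hprev] at h
      omega
    · rw [step_neg h]
      omega
  exact hgoal h1

def val (d : ℕ) (a : Fin d → ℕ) (j : Fin d) : ℕ := a j + d - 2 * ((j : ℕ) + 1)

def exs (d : ℕ) (a : Fin d → ℕ) : Finset (Fin d) :=
  Finset.univ.filter fun j => (j : ℕ) + 1 < a j

lemma mem_exs {a : Fin d → ℕ} {j : Fin d} : j ∈ exs d a ↔ (j : ℕ) + 1 < a j := by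
  simp [exs]

def NV (d : ℕ) (a : Fin d → ℕ) : ℕ := (exs d a).sup (val d a)

lemma val_le_NV {a : Fin d → ℕ} {j : Fin d} (h : j ∈ exs d a) : val d a j ≤ NV d a :=
  Finset.le_sup h

lemma one_le_NV {a : Fin d → ℕ} (h : (exs d a).Nonempty) : 1 ≤ NV d a := by
  obtain ⟨j, hj⟩ := h
  have h1 := val_le_NV hj
  have h2 := mem_exs.mp hj
  have hv : val d a j = a j + d - 2 * ((j : ℕ) + 1) := rfl
  have hjd := j.2
  omega

lemma valA {a : Fin d → ℕ} (ha : StrictMono a) (hge : ∀ j : Fin d, (j : ℕ) + 1 ≤ a j)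
    (j : Fin d) (hj : (j : ℕ) + 1 < stepFn d a j) :
    val d (stepFn d a) j + 1 ≤ NV d a := by
  have hv2 : val d (stepFn d a) j = stepFn d a j + d - 2 * ((j : ℕ) + 1) := rfl
  have hjd := j.2
  by_cases h : dcond d a j
  · have hs := step_pos h
    rw [hs] at hj
    have hjm : j ∈ exs d a := mem_exs.mpr (by omega)
    have h3 := val_le_NV hjm
    have hv : val d a j = a j + d - 2 * ((j : ℕ) + 1) := rfl
    omega
  · have hs := step_neg h
    rw [hs] at hj
    have hj0 : 0 < (j : ℕ) := by
      by_contra h0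
      exact h ((dcond_zero (by omega)).mpr (by omega))
    rw [dcond_pos hj0] at h
    set p : Fin d := ⟨(j : ℕ) - 1, Nat.lt_of_le_of_lt (Nat.sub_le _ _) j.2⟩ with hp
    have hpv : (p : ℕ) = (j : ℕ) - 1 := rfl
    have hlt : a p < a j := ha (by rw [Fin.lt_def, hpv]; omega)
    have hpm : p ∈ exs d a := mem_exs.mpr (by rw [hpv]; omega)
    have h3 := val_le_NV hpm
    have hv : val d a p = a p + d - 2 * ((j : ℕ) - 1 + 1) := rfl
    omega

lemma NV_step_lt {a : Fin d → ℕ} (ha : StrictMono a) (hge : ∀ j : Fin d, (j : ℕ) + 1 ≤ a j)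
    (hne : (exs d a).Nonempty) : NV d (stepFn d a) + 1 ≤ NV d a := by
  have h1 := one_le_NV hne
  have h2 : NV d (stepFn d a) ≤ NV d a - 1 := by
    apply Finset.sup_le
    intro j hj
    have := valA ha hge j (mem_exs.mp hj)
    have hv : val d (stepFn d a) j = stepFn d a j + d - 2 * ((j : ℕ) + 1) := rfl
    omega
  omega

lemma NV_step_ge {a : Fin d → ℕ} (ha : StrictMono a) (hge : ∀ j : Fin d, (j : ℕ) + 1 ≤ a j)
    (hne : (exs d a).Nonempty) : NV d a ≤ NV d (stepFn d a) + 1 := by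
  obtain ⟨j, hjm, hjv0⟩ := Finset.exists_mem_eq_sup (exs d a) hne (val d a)
  have hjv : NV d a = val d a j := hjv0
  have hjx : (j : ℕ) + 1 < a j := mem_exs.mp hjm
  have hjd := j.2
  have hvj : val d a j = a j + d - 2 * ((j : ℕ) + 1) := rfl
  have hdec : dcond d a j := by
    by_contra h
    have hj0 : 0 < (j : ℕ) := by
      by_contra h0
      exact h ((dcond_zero (by omega)).mpr (by omega))
    rw [dcond_pos hj0] at h
    set p : Fin d := ⟨(j : ℕ) - 1, Nat.lt_of_le_of_lt (Nat.sub_le _ _) j.2⟩ with hp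
    have hpv : (p : ℕ) = (j : ℕ) - 1 := rfl
    have hlt : a p < a j := ha (by rw [Fin.lt_def, hpv]; omega)
    have hpm : p ∈ exs d a := mem_exs.mpr (by rw [hpv]; omega)
    have h3 := val_le_NV hpm
    rw [hjv] at h3
    have hvp : val d a p = a p + d - 2 * ((j : ℕ) - 1 + 1) := rfl
    omega
  have hsj := step_pos hdec
  by_cases hbig : (j : ℕ) + 2 < a j
  · have hjm' : j ∈ exs d (stepFn d a) := mem_exs.mpr (by omega)
    have h6 := val_le_NV hjm'
    have hv6 : val d (stepFn d a) j = stepFn d a j + d - 2 * ((j : ℕ) + 1) := rfl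
    rw [hjv]
    omega
  · have haj : a j = (j : ℕ) + 2 := by omega
    by_cases hend : (j : ℕ) + 1 < d
    · set q : Fin d := ⟨(j : ℕ) + 1, hend⟩ with hq
      have hqv : (q : ℕ) = (j : ℕ) + 1 := rfl
      have hlt : a j < a q := ha (by rw [Fin.lt_def, hqv]; omega)
      have hqm : q ∈ exs d a := mem_exs.mpr (by rw [hqv]; omega)
      have hq1 := val_le_NV hqm
      rw [hjv] at hq1
      have hvq : val d a q = a q + d - 2 * ((j : ℕ) + 1 + 1) := rfl
      have hqub : a q ≤ (j : ℕ) + 4 := by omega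
      have hprevq : a ⟨(q : ℕ) - 1, Nat.lt_of_le_of_lt (Nat.sub_le _ _) q.2⟩ = a j := by
        congr 1
      have hsq3 : stepFn d a q = (j : ℕ) + 3 := by
        by_cases hd : dcond d a q
        · rw [step_pos hd]
          rw [dcond_pos (by rw [hqv]; omega), hprevq] at hd
          omega
        · rw [step_neg hd]
          rw [dcond_pos (by rw [hqv]; omega), hprevq] at hd
          omega
      have hqm' : q ∈ exs d (stepFn d a) := mem_exs.mpr (by rw [hsq3, hqv]; omega)
      have h7 := val_le_NV hqm'
      have hv7 : val d (stepFn d a) q = stepFn d a q + d - 2 * ((j : ℕ) + 1 + 1) := rfl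
      rw [hjv]
      omega
    · rw [hjv]
      omega

lemma NV_step {a : Fin d → ℕ} (ha : StrictMono a) (hge : ∀ j : Fin d, (j : ℕ) + 1 ≤ a j)
    (hne : (exs d a).Nonempty) : NV d (stepFn d a) + 1 = NV d a :=
  le_antisymm (NV_step_lt ha hge hne) (NV_step_ge ha hge hne)

lemma eq_id_of_exs_empty {a : Fin d → ℕ} (hge : ∀ j : Fin d, (j : ℕ) + 1 ≤ a j)
    (h : ¬ (exs d a).Nonempty) : a = fun i : Fin d => (i : ℕ) + 1 := by
  funext i
  have hm : i ∉ exs d a := fun hm => h ⟨i, hm⟩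
  rw [mem_exs] at hm
  have := hge i
  omega

lemma exs_nonempty_of_NV_pos {a : Fin d → ℕ} (h : 0 < NV d a) : (exs d a).Nonempty := by
  by_contra hne
  rw [Finset.not_nonempty_iff_eq_empty] at hne
  unfold NV at h
  rw [hne] at h
  simp at h

lemma iter_reach : ∀ (n : ℕ) (a : Fin d → ℕ), StrictMono a →
    (∀ j : Fin d, (j : ℕ) + 1 ≤ a j) → NV d a = n →
    (stepFn d)^[n] a = fun i : Fin d => (i : ℕ) + 1 := by
  intro n
  induction n with
  | zero =>
    intro a ha hge hN
    simp only [Function.iterate_zero, id]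
    apply eq_id_of_exs_empty hge
    intro hne
    have := one_le_NV hne
    omega
  | succ n ih =>
    intro a ha hge hN
    have hne : (exs d a).Nonempty := exs_nonempty_of_NV_pos (by omega)
    rw [Function.iterate_succ_apply]
    exact ih _ (step_mono ha) (step_ge hge) (by have := NV_step ha hge hne; omega)

lemma iter_min : ∀ (l : ℕ) (a : Fin d → ℕ), StrictMono a →
    (∀ j : Fin d, (j : ℕ) + 1 ≤ a j) →
    (stepFn d)^[l] a = (fun i : Fin d => (i : ℕ) + 1) → NV d a ≤ l := by
  intro l
  induction l with
  | zero =>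
    intro a ha hge h
    simp only [Function.iterate_zero, id] at h
    by_contra hpos
    obtain ⟨j, hj⟩ := exs_nonempty_of_NV_pos (a := a) (by omega)
    have hx := mem_exs.mp hj
    rw [h] at hx
    simp at hx
  | succ l ih =>
    intro a ha hge h
    rw [Function.iterate_succ_apply] at h
    have h2 := ih _ (step_mono ha) (step_ge hge) h
    by_cases hne : (exs d a).Nonempty
    · have := NV_step ha hge hne
      omega
    · have hz : NV d a = 0 := by
        by_contra hpos
        exact hne (exs_nonempty_of_NV_pos (by omega))
      omega

end Stmt7

/-- `τ(a) = m(a) + d + 1`: the chain obtained by iterating the step function from `a`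
down to `[1,...,d]` has `k + 1` elements, where `k` is the minimal number of iterations
needed, and `k + 1 = m(a) + d + 1` with `m(a) = max {a_j - 2j : a_j > j}`. -/
theorem stmt_7 (d : ℕ) (a : Fin d → ℕ) (ha : StrictMono a) (hpos : ∀ i, 1 ≤ a i)
    (hne : a ≠ fun i : Fin d => (i : ℕ) + 1)
    (M : ℤ)
    (hM : IsGreatest {x : ℤ | ∃ j : Fin d, (j : ℕ) + 1 < a j ∧
      x = (a j : ℤ) - 2 * ((j : ℕ) + 1)} M)
    (k : ℕ) (hk : (stepFn d)^[k] a = fun i : Fin d => (i : ℕ) + 1)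
    (hmin : ∀ l, (stepFn d)^[l] a = (fun i : Fin d => (i : ℕ) + 1) → k ≤ l) :
    (k : ℤ) + 1 = M + d + 1 := by
  have hge := Stmt7.ge_of_mono ha hpos
  have hk1 : k ≤ Stmt7.NV d a := hmin _ (Stmt7.iter_reach _ a ha hge rfl)
  have hk2 : Stmt7.NV d a ≤ k := Stmt7.iter_min k a ha hge hk
  have hkN : k = Stmt7.NV d a := le_antisymm hk1 hk2
  obtain ⟨j₀, hj₀, hMj⟩ := hM.1
  have hone : (Stmt7.exs d a).Nonempty := ⟨j₀, Stmt7.mem_exs.mpr hj₀⟩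
  obtain ⟨j, hjm, hjv0⟩ := Finset.exists_mem_eq_sup _ hone (Stmt7.val d a)
  have hjv : Stmt7.NV d a = Stmt7.val d a j := hjv0
  have hjx := Stmt7.mem_exs.mp hjm
  have hjd := j.2
  have hub : ((Stmt7.NV d a : ℕ) : ℤ) ≤ M + d := by
    have hMle : (a j : ℤ) - 2 * ((j : ℕ) + 1) ≤ M := hM.2 ⟨j, hjx, rfl⟩
    rw [hjv]
    have hv : Stmt7.val d a j = a j + d - 2 * ((j : ℕ) + 1) := rfl
    omega
  have hlb : M + d ≤ ((Stmt7.NV d a : ℕ) : ℤ) := by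
    have hle : Stmt7.val d a j₀ ≤ Stmt7.NV d a := Stmt7.val_le_NV (Stmt7.mem_exs.mpr hj₀)
    have hj₀d := j₀.2
    have hv0 : Stmt7.val d a j₀ = a j₀ + d - 2 * ((j₀ : ℕ) + 1) := rfl
    omega
  rw [hkN]
  omega
end

section
/- Let γ = [a_1,...,a_d] with 1 ≤ a_1 < ... < a_d ≤ n, γ ≠ [n-d+1,...,n], with block decomposition γ = [β_0,...,β_s] and gaps χ_0,...,χ_t (t = s if a_d < n, t = s-1 if a_d = n). Define κ_i = Σ_{j=0}^{i}|β_j| + Σ_{j=i}^{t}|χ_j|. Then max{κ_i : 0 ≤ i ≤ t} = d + 1 + max{n - a_{k_{i+1}} + 1 - 2(d - k_{i+1} + 1) : 0 ≤ i ≤ t}, where k_{i+1} is the index of the last entry of block β_i. -/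
/-- `max {κ_i} = d + 1 + max {n - a_{k_{i+1}} + 1 - 2(d - k_{i+1} + 1)}` over `0 ≤ i ≤ t`,
where `κ_i = Σ_{j=0}^{i}|β_j| + Σ_{j=i}^{t}|χ_j|`. -/
theorem stmt_10 (n d s t : ℕ) (hd : 1 ≤ d) (hdn : d ≤ n)
    -- γ is the strictly increasing tuple `a 0 < a 1 < ... < a (d-1)` (0-based indexing)
    (a : ℕ → ℕ)
    (hmono : ∀ j, j + 1 < d → a j < a (j + 1))
    (hbd : ∀ j < d, 1 ≤ a j ∧ a j ≤ n)
    -- γ ≠ [n-d+1,...,n]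
    (hne : ∃ j < d, a j ≠ n - d + 1 + j)
    -- block decomposition: block `i` (0 ≤ i ≤ s) occupies the 0-based indices
    -- `k i, k i + 1, ..., k (i+1) - 1`; its entries are consecutive integers, and
    -- consecutive blocks are separated by a nonempty gap
    (k : ℕ → ℕ) (hk0 : k 0 = 0) (hklast : k (s + 1) = d)
    (hkmono : ∀ i ≤ s, k i < k (i + 1))
    (hblock : ∀ i ≤ s, ∀ j, k i ≤ j → j + 1 < k (i + 1) → a (j + 1) = a j + 1)
    (hgap : ∀ i < s, a (k (i + 1) - 1) + 1 < a (k (i + 1)))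
    -- t = s if a_d < n, and t = s - 1 if a_d = n
    (ht : (a (d - 1) < n ∧ t = s) ∨ (a (d - 1) = n ∧ 1 ≤ s ∧ t = s - 1))
    -- gap sizes: |χ_i| for i < s, and the final gap |χ_s| = n - a_d
    (χ : ℕ → ℤ)
    (hχ : ∀ i < s, χ i = (a (k (i + 1)) : ℤ) - (a (k (i + 1) - 1) : ℤ) - 1)
    (hχs : χ s = (n : ℤ) - (a (d - 1) : ℤ))
    -- block sizes |β_i| = k (i+1) - k i
    (β : ℕ → ℤ) (hβ : ∀ i, β i = (k (i + 1) : ℤ) - (k i : ℤ))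
    (κ : ℕ → ℤ)
    (hκ : ∀ i, κ i = (∑ j ∈ Finset.Icc 0 i, β j) + ∑ j ∈ Finset.Icc i t, χ j) :
    (Finset.Icc 0 t).sup' (Finset.nonempty_Icc.mpr (Nat.zero_le t)) κ =
      (d : ℤ) + 1 + (Finset.Icc 0 t).sup' (Finset.nonempty_Icc.mpr (Nat.zero_le t))
        (fun i => (n : ℤ) - (a (k (i + 1) - 1) : ℤ) + 1 - 2 * ((d : ℤ) - (k (i + 1) : ℤ) + 1)) := by
  -- entries within a block are consecutive
  have hC : ∀ i ≤ s, ∀ c, k i + c < k (i + 1) → a (k i + c) = a (k i) + c := by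
    intro i hi c
    induction c with
    | zero => simp
    | succ c ih =>
      intro h
      have h1 : k i + c < k (i + 1) := by omega
      have h2 := hblock i hi (k i + c) (by omega) (by omega)
      have h3 := ih h1
      have h4 : k i + (c + 1) = (k i + c) + 1 := by omega
      rw [h4]
      omega
  have hC' : ∀ j ≤ s, (a (k (j + 1) - 1) : ℤ) = (a (k j) : ℤ) + (k (j + 1) : ℤ) - (k j : ℤ) - 1 := by
    intro j hj
    have hk := hkmono j hj
    have := hC j hj (k (j + 1) - 1 - k j) (by omega)
    have he : k j + (k (j + 1) - 1 - k j) = k (j + 1) - 1 := by omega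
    rw [he] at this
    have := this
    push_cast [this]
    omega
  -- telescoping sum of block sizes
  have hA : ∀ i, (∑ j ∈ Finset.Icc 0 i, β j) = (k (i + 1) : ℤ) := by
    intro i
    induction i with
    | zero => simp [hβ, hk0]
    | succ i ih =>
      rw [Finset.sum_Icc_succ_top (Nat.zero_le _), ih, hβ]
      ring
  -- telescoping sum of gap sizes
  have hD : ∀ m i, i ≤ s → s = i + m →
      (∑ j ∈ Finset.Icc i s, χ j) =
        (n : ℤ) - (a (k (i + 1) - 1) : ℤ) - ((d : ℤ) - (k (i + 1) : ℤ)) := by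
    intro m
    induction m with
    | zero =>
      intro i hi hs
      have : i = s := by omega
      subst this
      rw [Finset.Icc_self, Finset.sum_singleton, hχs, hklast]
      ring
    | succ m ih =>
      intro i hi hs
      have his : i < s := by omega
      rw [Finset.Icc_eq_cons_Ioc (by omega : i ≤ s), Finset.sum_cons,
        show Finset.Ioc i s = Finset.Icc (i + 1) s from (Finset.Icc_add_one_left_eq_Ioc i s).symm,
        ih (i + 1) (by omega) (by omega), hχ i his]
      have h1 := hC' (i + 1) (by omega)
      linarith
  -- pointwise identity
  have hpt : ∀ i ∈ Finset.Icc 0 t, κ i =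
      (d : ℤ) + 1 + ((n : ℤ) - (a (k (i + 1) - 1) : ℤ) + 1 - 2 * ((d : ℤ) - (k (i + 1) : ℤ) + 1)) := by
    intro i hi
    rw [Finset.mem_Icc] at hi
    have hit : i ≤ t := hi.2
    have hsum : (∑ j ∈ Finset.Icc i t, χ j) =
        (n : ℤ) - (a (k (i + 1) - 1) : ℤ) - ((d : ℤ) - (k (i + 1) : ℤ)) := by
      rcases ht with ⟨_, hts⟩ | ⟨had, hs1, hts⟩
      · rw [hts]
        exact hD (s - i) i (by omega) (by omega)
      · have hi' : i ≤ s - 1 := by omega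
        have hss : s - 1 + 1 = s := by omega
        have h0 : χ s = 0 := by rw [hχs, had]; ring
        have := hD (s - i) i (by omega) (by omega)
        rw [show Finset.Icc i s = Finset.Icc i (s - 1 + 1) by rw [hss],
          Finset.sum_Icc_succ_top (by omega), hss, h0] at this
        rw [hts]
        linarith
    rw [hκ, hA, hsum]
    ring
  -- conclude for sup'
  have hne' := Finset.nonempty_Icc.mpr (Nat.zero_le t)
  apply le_antisymm
  · apply Finset.sup'_le
    intro i hi
    rw [hpt i hi]
    exact add_le_add_right (Finset.le_sup'
      (fun i => (n : ℤ) - (a (k (i + 1) - 1) : ℤ) + 1 - 2 * ((d : ℤ) - (k (i + 1) : ℤ) + 1)) hi) _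
  · obtain ⟨i, hi, hval⟩ := Finset.exists_mem_eq_sup' hne'
      (fun i => (n : ℤ) - (a (k (i + 1) - 1) : ℤ) + 1 - 2 * ((d : ℤ) - (k (i + 1) : ℤ) + 1))
    rw [hval, ← hpt i hi]
    exact Finset.le_sup' _ hi
end

section
/- Let Π be a poset, A a commutative ring, and suppose every element of A is a B-linear combination of standard monomials on Π (products of chains). Let Ω be a straightening-closed poset ideal of Π in a graded ASL A on Π over B, and I = AΩ. Then for any u ∈ ℕ, an element z ∈ A lies in I^u if and only if every standard monomial appearing in the standard representation of z has at least u factors in Ω. -/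
/-- Data of a graded algebra with straightening law (ASL) on a poset `P` over a
commutative ring `B`: an embedding of `P` into the `B`-algebra `A` such that the
standard monomials (products over weakly increasing chains in `P`) form a `B`-basis
of `A`, and for incomparable `α, β` every standard monomial appearing in the
straightening relation of `α * β` contains a factor `ζ` with `ζ ≤ α` and `ζ ≤ β`. -/
structure ASLData (P B A : Type*) [PartialOrder P] [CommRing B] [CommRing A]
    [Algebra B A] where
  emb : P → A
  basis : Module.Basis {l : List P // l.Pairwise (· ≤ ·)} B A
  basis_eq : ∀ l, basis l = (l.1.map emb).prod
  straighten : ∀ α β : P, ¬ α ≤ β → ¬ β ≤ α →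
    ∀ μ ∈ (basis.repr (emb α * emb β)).support, ∃ ζ ∈ μ.1, ζ ≤ α ∧ ζ ≤ β

/-- The number of factors of the (standard) monomial `l` lying in `Ω`. -/
noncomputable def countIn {P : Type*} (Ω : Set P) (l : List P) : ℕ :=
  l.countP fun z => @decide (z ∈ Ω) (Classical.propDecidable _)

namespace ASL12

open scoped Classical

set_option linter.unusedSectionVars false

variable {P B A : Type*} [PartialOrder P] [CommRing B] [CommRing A] [Algebra B A]

/-- Standard monomial associated to a list. -/
noncomputable def SM (D : ASLData P B A) (m : List P) : A := (m.map D.emb).prod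

/-- Span of standard monomials with at least `u` factors in `Ω`. -/
noncomputable def Nu (D : ASLData P B A) (Ω : Set P) (u : ℕ) : Submodule B A :=
  Submodule.span B (D.basis '' {l : {l : List P // l.Pairwise (· ≤ ·)} | u ≤ countIn Ω l.1})


lemma countIn_nil (Ω : Set P) : countIn Ω ([] : List P) = 0 := rfl

lemma countIn_cons (Ω : Set P) (x : P) (l : List P) :
    countIn Ω (x :: l) = countIn Ω l + (if x ∈ Ω then 1 else 0) := by
  unfold countIn
  rw [List.countP_cons]
  congr 1
  by_cases h : x ∈ Ω <;> simp [h]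

lemma SM_nil (D : ASLData P B A) : SM D ([] : List P) = 1 := by simp [SM]

lemma SM_cons (D : ASLData P B A) (x : P) (m : List P) : SM D (x :: m) = D.emb x * SM D m := by simp [SM]

lemma basis_SM (D : ASLData P B A) (μ : {l : List P // l.Pairwise (· ≤ ·)}) : D.basis μ = SM D μ.1 :=
  D.basis_eq μ

lemma mem_Nu_iff (D : ASLData P B A) (Ω : Set P) (u : ℕ) (z : A) :
    z ∈ Nu D Ω u ↔ ∀ μ ∈ (D.basis.repr z).support, u ≤ countIn Ω μ.1 := by
  rw [Nu, Module.Basis.mem_span_image]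
  exact ⟨fun h μ hμ => h (Finset.mem_coe.mpr hμ), fun h μ hμ => h μ (Finset.mem_coe.mp hμ)⟩

lemma SM_mem_Nu (D : ASLData P B A) (Ω : Set P) {m : List P} (hs : m.Pairwise (· ≤ ·)) {u : ℕ} (h : u ≤ countIn Ω m) :
    SM D m ∈ Nu D Ω u := by
  have hb : D.basis ⟨m, hs⟩ = SM D m := D.basis_eq _
  rw [← hb]
  exact Submodule.subset_span ⟨⟨m, hs⟩, h, rfl⟩

lemma Nu_zero (D : ASLData P B A) (Ω : Set P) (z : A) : z ∈ Nu D Ω 0 := by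
  rw [mem_Nu_iff]
  intro μ _
  exact Nat.zero_le _

/-- Multiplication helper via span induction. -/
lemma mul_Nu (D : ASLData P B A) (Ω : Set P) {x : A} {v w : ℕ}
    (h : ∀ m : List P, m.Pairwise (· ≤ ·) → v ≤ countIn Ω m → x * SM D m ∈ Nu D Ω w) :
    ∀ z ∈ Nu D Ω v, x * z ∈ Nu D Ω w := by
  intro z hz
  induction hz using Submodule.span_induction with
  | mem y hy =>
    obtain ⟨l, hl, rfl⟩ := hy
    rw [basis_SM]
    exact h l.1 l.2 hl
  | zero => rw [mul_zero]; exact zero_mem _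
  | add a b _ _ ha hb => rw [mul_add]; exact add_mem ha hb
  | smul c a _ ha => rw [mul_smul_comm]; exact Submodule.smul_mem _ c ha

/-- Expanding the left factor in its standard representation. -/
lemma repr_mul_mem (D : ASLData P B A) {z c : A} {N : Submodule B A}
    (h : ∀ μ ∈ (D.basis.repr z).support, D.basis μ * c ∈ N) : z * c ∈ N := by
  have hz : z * c = ∑ μ ∈ (D.basis.repr z).support,
      (D.basis.repr z) μ • (D.basis μ * c) := by
    conv_lhs => rw [← D.basis.linearCombination_repr z, Finsupp.linearCombination_apply,
      Finsupp.sum, Finset.sum_mul]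
    exact Finset.sum_congr rfl fun μ _ => smul_mul_assoc _ _ _
  rw [hz]
  exact Submodule.sum_mem _ fun μ hμ => Submodule.smul_mem _ _ (h μ hμ)

lemma mem_head (Ω : Set P) (hideal : ∀ x ∈ Ω, ∀ y, y ≤ x → y ∈ Ω) {ξ : P} {t : List P}
    (hs : (ξ :: t).Pairwise (· ≤ ·)) (h : 1 ≤ countIn Ω (ξ :: t)) : ξ ∈ Ω := by
  have hpos : 0 < (ξ :: t).countP fun z => @decide (z ∈ Ω) (Classical.propDecidable _) := h
  obtain ⟨a, ha, hpa⟩ := List.countP_pos_iff.mp hpos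
  have haΩ : a ∈ Ω := of_decide_eq_true hpa
  have hle : ξ ≤ a := by
    rcases List.mem_cons.mp ha with rfl | ha'
    · exact le_rfl
    · exact (List.pairwise_cons.mp hs).1 a ha'
  exact hideal a haΩ ξ hle

lemma exists_two (Ω : Set P) (hideal : ∀ x ∈ Ω, ∀ y, y ≤ x → y ∈ Ω) {m : List P}
    (hs : m.Pairwise (· ≤ ·)) (h2 : 2 ≤ countIn Ω m) :
    ∃ h0 s rest, m = h0 :: s :: rest ∧ h0 ∈ Ω ∧ s ∈ Ω := by
  match m, hs, h2 with
  | [], _, h2 => simp [countIn_nil] at h2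
  | [x], _, h2 =>
    exfalso
    have hle : countIn Ω [x] ≤ 1 := List.countP_le_length
    omega
  | x :: y :: rest, hs, h2 =>
    refine ⟨x, y, rest, rfl, ?_, ?_⟩
    · exact mem_head Ω hideal hs (le_trans (by norm_num) h2)
    · have hs' : (y :: rest).Pairwise (· ≤ ·) := (List.pairwise_cons.mp hs).2
      apply mem_head Ω hideal hs'
      have hc := countIn_cons Ω x (y :: rest)
      by_cases hx : x ∈ Ω <;> simp [hx] at hc <;> omega

lemma SM_mem_pow (D : ASLData P B A) (Ω : Set P) (m : List P) :
    SM D m ∈ (Ideal.span (D.emb '' Ω)) ^ (countIn Ω m) := by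
  induction m with
  | nil => rw [SM_nil, countIn_nil, pow_zero, Ideal.one_eq_top]; exact Submodule.mem_top
  | cons x m ih =>
    rw [SM_cons, countIn_cons]
    by_cases hx : x ∈ Ω
    · rw [if_pos hx, pow_succ]
      have hcomm : D.emb x * SM D m = SM D m * D.emb x := mul_comm _ _
      rw [hcomm]
      exact Ideal.mul_mem_mul ih (Ideal.subset_span ⟨x, hx, rfl⟩)
    · rw [if_neg hx, Nat.add_zero]
      exact Ideal.mul_mem_left _ _ ih

variable [Fintype P]

/-- The key simultaneous induction:
(K) multiplying `Nu u` by a generator from `Ω` lands in `Nu (u+1)`;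
(M) `Nu (u+1)` is an ideal. -/
lemma key (D : ASLData P B A) (Ω : Set P) (hideal : ∀ x ∈ Ω, ∀ y, y ≤ x → y ∈ Ω)
    (hsc : ∀ δ ∈ Ω, ∀ τ ∈ Ω, ¬ δ ≤ τ → ¬ τ ≤ δ →
      ∀ μ ∈ (D.basis.repr (D.emb δ * D.emb τ)).support, 2 ≤ countIn Ω μ.1) :
    ∀ u : ℕ,
      (∀ ω ∈ Ω, ∀ z ∈ Nu D Ω u, D.emb ω * z ∈ Nu D Ω (u + 1)) ∧
      (∀ a : A, ∀ z ∈ Nu D Ω (u + 1), a * z ∈ Nu D Ω (u + 1)) := by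
  intro u
  induction u using Nat.strong_induction_on with
  | _ u IH =>
  -- Lower-level facts, available for all poset elements.
  have Mst : ∀ v, v ≤ u → ∀ a : A, ∀ z ∈ Nu D Ω v, a * z ∈ Nu D Ω v := by
    intro v hv
    match v, hv with
    | 0, _ => intro a z _; exact Nu_zero D Ω _
    | v + 1, hv => exact (IH v (Nat.lt_of_succ_le hv)).2
  have Kst : ∀ v, v < u → ∀ ω ∈ Ω, ∀ z ∈ Nu D Ω v, D.emb ω * z ∈ Nu D Ω (v + 1) :=
    fun v hv => (IH v hv).1
  -- The core statement, by well-founded induction on the poset element.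
  have wf : WellFounded ((· < ·) : P → P → Prop) := wellFounded_lt
  let C : P → Prop := fun π =>
      (π ∈ Ω → ∀ m : List P, m.Pairwise (· ≤ ·) → u ≤ countIn Ω m →
        D.emb π * SM D m ∈ Nu D Ω (u + 1)) ∧
      (∀ m : List P, m.Pairwise (· ≤ ·) → u + 1 ≤ countIn Ω m →
        D.emb π * SM D m ∈ Nu D Ω (u + 1))
  have core : ∀ π : P, C π := by
    intro π
    refine wf.induction (C := C) π ?_
    intro π IHπ
    show (π ∈ Ω → ∀ m : List P, m.Pairwise (· ≤ ·) → u ≤ countIn Ω m →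
        D.emb π * SM D m ∈ Nu D Ω (u + 1)) ∧
      (∀ m : List P, m.Pairwise (· ≤ ·) → u + 1 ≤ countIn Ω m →
        D.emb π * SM D m ∈ Nu D Ω (u + 1))
    replace IHπ : ∀ ζ, ζ < π →
      (ζ ∈ Ω → ∀ m : List P, m.Pairwise (· ≤ ·) → u ≤ countIn Ω m →
        D.emb ζ * SM D m ∈ Nu D Ω (u + 1)) ∧
      (∀ m : List P, m.Pairwise (· ≤ ·) → u + 1 ≤ countIn Ω m →
        D.emb ζ * SM D m ∈ Nu D Ω (u + 1)) := IHπ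
    -- lifting the WF hypothesis (K-part) to spans
    have liftK : ∀ ζ, ζ < π → ζ ∈ Ω → ∀ z ∈ Nu D Ω u, D.emb ζ * z ∈ Nu D Ω (u + 1) :=
      fun ζ h1 h2 => mul_Nu D Ω (fun m hs hc => (IHπ ζ h1).1 h2 m hs hc)
    constructor
    · -- K-part
      intro hπΩ m hs hc
      match m, hs, hc with
      | [], _, hc =>
        have hu : u = 0 := Nat.le_zero.mp (by simpa [countIn_nil] using hc)
        subst hu
        have h1 : D.emb π * SM D ([] : List P) = SM D [π] := by
          rw [SM_nil, SM_cons, SM_nil]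
        rw [h1]
        exact SM_mem_Nu D Ω (List.pairwise_singleton _ π) (by simp [countIn_cons, countIn_nil, hπΩ])
      | ξ :: t, hs, hc =>
        have hts : t.Pairwise (· ≤ ·) := (List.pairwise_cons.mp hs).2
        by_cases h1 : π ≤ ξ
        · -- π can be prepended
          have hsort : (π :: ξ :: t).Pairwise (· ≤ ·) := by
            rw [List.pairwise_cons]
            refine ⟨?_, hs⟩
            intro b hb
            rcases List.mem_cons.mp hb with rfl | hb'
            · exact h1
            · exact le_trans h1 ((List.pairwise_cons.mp hs).1 b hb')
          have he : D.emb π * SM D (ξ :: t) = SM D (π :: ξ :: t) := by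
            rw [SM_cons D π (ξ :: t)]
          rw [he]
          refine SM_mem_Nu D Ω hsort ?_
          rw [countIn_cons, if_pos hπΩ]
          omega
        · by_cases h2 : ξ ≤ π
          · -- ξ < π, and ξ ∈ Ω automatically
            have hξΩ : ξ ∈ Ω := hideal π hπΩ ξ h2
            have hlt : ξ < π := lt_of_le_of_ne h2 (fun e => h1 (e ▸ le_rfl))
            have hct : countIn Ω (ξ :: t) = countIn Ω t + 1 := by
              rw [countIn_cons, if_pos hξΩ]
            have hmid : D.emb π * SM D t ∈ Nu D Ω u := by
              cases u with
              | zero => exact Nu_zero D Ω _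
              | succ v =>
                refine Kst v (Nat.lt_succ_self v) π hπΩ _ (SM_mem_Nu D Ω hts ?_)
                omega
            have he : D.emb π * SM D (ξ :: t) = D.emb ξ * (D.emb π * SM D t) := by
              rw [SM_cons]; ring
            rw [he]
            exact liftK ξ hlt hξΩ _ hmid
          · -- π and ξ incomparable: straighten
            have he : D.emb π * SM D (ξ :: t) = (D.emb π * D.emb ξ) * SM D t := by
              rw [SM_cons]; ring
            rw [he]
            refine repr_mul_mem D ?_
            intro μ hμ
            obtain ⟨ζ, hζm, hζπ, hζξ⟩ := D.straighten π ξ h1 h2 μ hμ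
            by_cases hξΩ : ξ ∈ Ω
            · -- use straightening-closedness
              have h2c := hsc π hπΩ ξ hξΩ h1 h2 μ hμ
              obtain ⟨h0, s, rest, heq, hh0Ω, hsΩ⟩ := exists_two Ω hideal μ.2 h2c
              have hsort : (h0 :: s :: rest).Pairwise (· ≤ ·) := heq ▸ μ.2
              have hh0ζ : h0 ≤ ζ := by
                have hζm' : ζ ∈ h0 :: s :: rest := heq ▸ hζm
                rcases List.mem_cons.mp hζm' with rfl | hmem
                · exact le_rfl
                · exact (List.pairwise_cons.mp hsort).1 ζ hmem
              have hh0lt : h0 < π :=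
                lt_of_le_of_ne (le_trans hh0ζ hζπ)
                  (fun e => h1 (e ▸ (le_trans hh0ζ hζξ)))
              have hbasis : D.basis μ * SM D t
                  = D.emb h0 * (D.emb s * (SM D rest * SM D t)) := by
                rw [basis_SM, heq, SM_cons, SM_cons]; ring
              rw [hbasis]
              have hrs : (rest).Pairwise (· ≤ ·) :=
                (List.pairwise_cons.mp (List.pairwise_cons.mp hsort).2).2
              have hinner : D.emb s * (SM D rest * SM D t) ∈ Nu D Ω u := by
                cases u with
                | zero => exact Nu_zero D Ω _
                | succ v =>
                  have hct : v ≤ countIn Ω t := by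
                    rw [countIn_cons, if_pos hξΩ] at hc; omega
                  have hm1 : SM D t ∈ Nu D Ω v := SM_mem_Nu D Ω hts hct
                  have hm2 : SM D rest * SM D t ∈ Nu D Ω v :=
                    Mst v (Nat.le_succ v) _ _ hm1
                  exact Kst v (Nat.lt_succ_self v) s hsΩ _ hm2
              exact liftK h0 hh0lt hh0Ω _ hinner
            · -- ξ ∉ Ω: counts of t suffice
              have hζΩ : ζ ∈ Ω := hideal π hπΩ ζ hζπ
              obtain ⟨h0, tail, heq⟩ : ∃ h0 tail, μ.1 = h0 :: tail := by
                cases hm : μ.1 with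
                | nil => rw [hm] at hζm; simp at hζm
                | cons a l => exact ⟨a, l, rfl⟩
              have hsort : (h0 :: tail).Pairwise (· ≤ ·) := heq ▸ μ.2
              have hh0ζ : h0 ≤ ζ := by
                have hζm' : ζ ∈ h0 :: tail := heq ▸ hζm
                rcases List.mem_cons.mp hζm' with rfl | hmem
                · exact le_rfl
                · exact (List.pairwise_cons.mp hsort).1 ζ hmem
              have hh0Ω : h0 ∈ Ω := hideal ζ hζΩ h0 hh0ζ
              have hh0lt : h0 < π :=
                lt_of_le_of_ne (le_trans hh0ζ hζπ)
                  (fun e => h1 (e ▸ (le_trans hh0ζ hζξ)))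
              have hbasis : D.basis μ * SM D t = D.emb h0 * (SM D tail * SM D t) := by
                rw [basis_SM, heq, SM_cons]; ring
              rw [hbasis]
              have hct : u ≤ countIn Ω t := by
                rw [countIn_cons, if_neg hξΩ] at hc; omega
              have hm1 : SM D t ∈ Nu D Ω u := SM_mem_Nu D Ω hts hct
              have hm2 : SM D tail * SM D t ∈ Nu D Ω u := Mst u le_rfl _ _ hm1
              exact liftK h0 hh0lt hh0Ω _ hm2
    · -- M-part
      intro m hs hc
      match m, hs, hc with
      | [], _, hc =>
        rw [countIn_nil] at hc
        exact (Nat.not_succ_le_zero u hc).elim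
      | ξ :: t, hs, hc =>
        have hts : t.Pairwise (· ≤ ·) := (List.pairwise_cons.mp hs).2
        have hξΩ : ξ ∈ Ω := mem_head Ω hideal hs (le_trans (by omega) hc)
        have hct : u ≤ countIn Ω t := by
          rw [countIn_cons, if_pos hξΩ] at hc; omega
        by_cases h1 : π ≤ ξ
        · have hπΩ : π ∈ Ω := hideal ξ hξΩ π h1
          have hsort : (π :: ξ :: t).Pairwise (· ≤ ·) := by
            rw [List.pairwise_cons]
            refine ⟨?_, hs⟩
            intro b hb
            rcases List.mem_cons.mp hb with rfl | hb'
            · exact h1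
            · exact le_trans h1 ((List.pairwise_cons.mp hs).1 b hb')
          have he : D.emb π * SM D (ξ :: t) = SM D (π :: ξ :: t) := by
            rw [SM_cons D π (ξ :: t)]
          rw [he]
          refine SM_mem_Nu D Ω hsort ?_
          rw [countIn_cons, if_pos hπΩ]
          omega
        · by_cases h2 : ξ ≤ π
          · have hlt : ξ < π := lt_of_le_of_ne h2 (fun e => h1 (e ▸ le_rfl))
            have hmid : D.emb π * SM D t ∈ Nu D Ω u :=
              Mst u le_rfl _ _ (SM_mem_Nu D Ω hts hct)
            have he : D.emb π * SM D (ξ :: t) = D.emb ξ * (D.emb π * SM D t) := by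
              rw [SM_cons]; ring
            rw [he]
            exact liftK ξ hlt hξΩ _ hmid
          · -- incomparable
            have he : D.emb π * SM D (ξ :: t) = (D.emb π * D.emb ξ) * SM D t := by
              rw [SM_cons]; ring
            rw [he]
            refine repr_mul_mem D ?_
            intro μ hμ
            obtain ⟨ζ, hζm, hζπ, hζξ⟩ := D.straighten π ξ h1 h2 μ hμ
            have hζΩ : ζ ∈ Ω := hideal ξ hξΩ ζ hζξ
            obtain ⟨h0, tail, heq⟩ : ∃ h0 tail, μ.1 = h0 :: tail := by
              cases hm : μ.1 with
              | nil => rw [hm] at hζm; simp at hζm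
              | cons a l => exact ⟨a, l, rfl⟩
            have hsort : (h0 :: tail).Pairwise (· ≤ ·) := heq ▸ μ.2
            have hh0ζ : h0 ≤ ζ := by
              have hζm' : ζ ∈ h0 :: tail := heq ▸ hζm
              rcases List.mem_cons.mp hζm' with rfl | hmem
              · exact le_rfl
              · exact (List.pairwise_cons.mp hsort).1 ζ hmem
            have hh0Ω : h0 ∈ Ω := hideal ζ hζΩ h0 hh0ζ
            have hh0lt : h0 < π :=
              lt_of_le_of_ne (le_trans hh0ζ hζπ)
                (fun e => h1 (e ▸ (le_trans hh0ζ hζξ)))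
            have hbasis : D.basis μ * SM D t = D.emb h0 * (SM D tail * SM D t) := by
              rw [basis_SM, heq, SM_cons]; ring
            rw [hbasis]
            have hm1 : SM D t ∈ Nu D Ω u := SM_mem_Nu D Ω hts hct
            have hm2 : SM D tail * SM D t ∈ Nu D Ω u := Mst u le_rfl _ _ hm1
            exact liftK h0 hh0lt hh0Ω _ hm2
  -- Assemble the two conclusions.
  constructor
  · exact fun ω hω => mul_Nu D Ω (fun m hs hc => (core ω).1 hω m hs hc)
  · intro a z hz
    have single : ∀ (π : P) (w : A), w ∈ Nu D Ω (u + 1) → D.emb π * w ∈ Nu D Ω (u + 1) :=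
      fun π => mul_Nu D Ω (fun m hs hc => (core π).2 m hs hc)
    have listmul : ∀ (m : List P) (w : A), w ∈ Nu D Ω (u + 1) → SM D m * w ∈ Nu D Ω (u + 1) := by
      intro m
      induction m with
      | nil => intro w hw; rw [SM_nil, one_mul]; exact hw
      | cons x m ih =>
        intro w hw
        rw [SM_cons, mul_assoc]
        exact single x _ (ih w hw)
    exact repr_mul_mem D (fun μ _ => by rw [basis_SM]; exact listmul μ.1 z hz)

lemma pow_mem (D : ASLData P B A) (Ω : Set P) (hideal : ∀ x ∈ Ω, ∀ y, y ≤ x → y ∈ Ω)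
    (hsc : ∀ δ ∈ Ω, ∀ τ ∈ Ω, ¬ δ ≤ τ → ¬ τ ≤ δ →
      ∀ μ ∈ (D.basis.repr (D.emb δ * D.emb τ)).support, 2 ≤ countIn Ω μ.1)
    (u : ℕ) : ∀ z ∈ (Ideal.span (D.emb '' Ω)) ^ u, z ∈ Nu D Ω u := by
  induction u with
  | zero => intro z _; exact Nu_zero D Ω z
  | succ u ih =>
    intro z hz
    rw [pow_succ] at hz
    refine Submodule.mul_induction_on hz ?_ ?_
    · intro x hx y hy
      have hx' : x ∈ Nu D Ω u := ih x hx
      induction hy using Submodule.span_induction with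
      | mem g hg =>
        obtain ⟨ω, hω, rfl⟩ := hg
        rw [mul_comm]
        exact (key D Ω hideal hsc u).1 ω hω x hx'
      | zero => rw [mul_zero]; exact zero_mem _
      | add y1 y2 _ _ hy1 hy2 => rw [mul_add]; exact add_mem hy1 hy2
      | smul c y' _ hy' =>
        have he : x * (c • y') = c * (x * y') := by rw [smul_eq_mul]; ring
        rw [he]
        exact (key D Ω hideal hsc u).2 c _ hy'
    · intro x y h1 h2
      exact add_mem h1 h2

end ASL12

/-- For a straightening-closed poset ideal `Ω` of `P` with `I = AΩ`, an element `z ∈ A`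
lies in `I^u` iff every standard monomial in the standard representation of `z` has at
least `u` factors in `Ω`. -/
theorem stmt_12 {P B A : Type*} [PartialOrder P] [Fintype P] [CommRing B] [CommRing A]
    [Algebra B A] (D : ASLData P B A) (Ω : Set P)
    -- Ω is a poset ideal
    (hideal : ∀ x ∈ Ω, ∀ y, y ≤ x → y ∈ Ω)
    -- Ω is straightening-closed
    (hsc : ∀ δ ∈ Ω, ∀ τ ∈ Ω, ¬ δ ≤ τ → ¬ τ ≤ δ →
      ∀ μ ∈ (D.basis.repr (D.emb δ * D.emb τ)).support, 2 ≤ countIn Ω μ.1)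
    (u : ℕ) (z : A) :
    z ∈ (Ideal.span (D.emb '' Ω)) ^ u ↔
      ∀ μ ∈ (D.basis.repr z).support, u ≤ countIn Ω μ.1 := by
  constructor
  · intro hz
    exact (ASL12.mem_Nu_iff D Ω u z).mp (ASL12.pow_mem D Ω hideal hsc u z hz)
  · intro h
    have hz : z ∈ ASL12.Nu D Ω u := (ASL12.mem_Nu_iff D Ω u z).mpr h
    clear h
    induction hz using Submodule.span_induction with
    | mem w hw =>
      obtain ⟨l, hl, rfl⟩ := hw
      rw [D.basis_eq]
      exact Ideal.pow_le_pow_right hl (ASL12.SM_mem_pow D Ω l.1)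
    | zero => exact zero_mem _
    | add a b _ _ ha hb => exact add_mem ha hb
    | smul c a _ ha => rw [Algebra.smul_def]; exact Ideal.mul_mem_left _ _ ha
end

section
/- Let A be a graded ASL on a poset Π over a commutative ring B, and let Ω_1,...,Ω_n be straightening-closed poset ideals of Π with I_i = AΩ_i. For any u_1,...,u_n ∈ ℕ with u = max{u_1,...,u_n}, the ideal I_1^{u_1} ∩ ... ∩ I_n^{u_n} of A is generated by the set of standard monomials ξ_1ξ_2···ξ_u (ξ_1 ≤ ... ≤ ξ_u in Π) such that ξ_1,...,ξ_{u_i} ∈ Ω_i for each i. In particular, if A is a homogeneous ASL (each ξ ∈ Π has degree 1), then this intersection is generated in degree u. -/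
set_option linter.unusedSectionVars false

namespace ASLHelp

variable {P : Type*} [PartialOrder P]

abbrev SL (P : Type*) [PartialOrder P] := {l : List P // l.Pairwise (· ≤ ·)}

section Count

variable (Ω : Set P)

lemma countIn_le_length (l : List P) : countIn Ω l ≤ l.length :=
  List.countP_le_length

lemma countIn_cons_of_mem {a : P} (ha : a ∈ Ω) (l : List P) :
    countIn Ω (a :: l) = countIn Ω l + 1 := by
  unfold countIn
  rw [List.countP_cons, if_pos (@decide_eq_true _ (Classical.propDecidable _) ha)]

lemma countIn_cons_le (a : P) (l : List P) :
    countIn Ω (a :: l) ≤ countIn Ω l + 1 := by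
  unfold countIn
  rw [List.countP_cons]
  split <;> omega

lemma le_countIn_cons (a : P) (l : List P) :
    countIn Ω l ≤ countIn Ω (a :: l) := by
  unfold countIn
  rw [List.countP_cons]
  omega

lemma countIn_pos_iff (l : List P) :
    0 < countIn Ω l ↔ ∃ a ∈ l, a ∈ Ω := by
  unfold countIn
  rw [List.countP_pos_iff]
  simp only [decide_eq_true_eq]

variable {Ω}
variable (hid : ∀ x ∈ Ω, ∀ y, y ≤ x → y ∈ Ω)
include hid

lemma head_mem_of_countIn_pos {a : P} {l : List P} (hs : (a :: l).Pairwise (· ≤ ·))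
    (h : 0 < countIn Ω (a :: l)) : a ∈ Ω := by
  obtain ⟨z, hz, hzΩ⟩ := (countIn_pos_iff Ω _).1 h
  rcases List.mem_cons.1 hz with rfl | hz'
  · exact hzΩ
  · exact hid z hzΩ a ((List.pairwise_cons.1 hs).1 z hz')

lemma get_mem_of_lt_countIn :
    ∀ (l : List P), l.Pairwise (· ≤ ·) → ∀ (j : ℕ) (h : j < l.length),
      j < countIn Ω l → l.get ⟨j, h⟩ ∈ Ω := by
  intro l
  induction l with
  | nil => intro _ j h; simp at h
  | cons a l ih =>
    intro hs j h hj
    cases j with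
    | zero => exact head_mem_of_countIn_pos hid hs hj
    | succ j =>
      have h1 : countIn Ω (a :: l) ≤ countIn Ω l + 1 := countIn_cons_le Ω a l
      exact ih (List.pairwise_cons.1 hs).2 j (by simpa using h) (by omega)

lemma mem_take_of_le_countIn {l : List P} (hs : l.Pairwise (· ≤ ·)) {k : ℕ}
    (hk : k ≤ countIn Ω l) : ∀ y ∈ l.take k, y ∈ Ω := by
  intro y hy
  obtain ⟨j, hjlen, hget⟩ := List.getElem_of_mem hy
  have hjk : j < k := by
    have := List.length_take (i := k) (l := l)
    omega
  have hjl : j < l.length := lt_of_lt_of_le hjk (le_trans hk (countIn_le_length Ω l))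
  rw [List.getElem_take] at hget
  subst hget
  exact get_mem_of_lt_countIn hid l hs j hjl (lt_of_lt_of_le hjk hk)

end Count

section Rank

variable [Fintype P]

noncomputable def rk (x : P) : ℕ := {z : P | z < x}.ncard

lemma rk_lt_rk {x y : P} (h : x < y) : rk x < rk y := by
  apply Set.ncard_lt_ncard
  · constructor
    · intro z hz; exact lt_trans hz h
    · intro hsub
      exact absurd (hsub h) (lt_irrefl x)
  · exact Set.toFinite _

lemma rk_le_rk {x y : P} (h : x ≤ y) : rk x ≤ rk y := by
  apply Set.ncard_le_ncard
  · intro z hz; exact lt_of_lt_of_le hz h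
  · exact Set.toFinite _

lemma rk_lt_bound (x : P) : rk x < Fintype.card P + 1 := by
  have : rk x ≤ Fintype.card P := by
    have h1 : {z : P | z < x}.ncard ≤ (Set.univ : Set P).ncard :=
      Set.ncard_le_ncard (Set.subset_univ _) (Set.toFinite _)
    rw [Set.ncard_univ, Nat.card_eq_fintype_card] at h1
    exact h1
  omega

end Rank


section Basis

variable {P B A : Type*} [PartialOrder P] [CommRing B] [CommRing A] [Algebra B A]
variable (D : ASLData P B A)

noncomputable def pr (l : List P) : A := (l.map D.emb).prod

@[simp] lemma pr_nil : pr D ([] : List P) = 1 := rfl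

@[simp] lemma pr_cons (a : P) (l : List P) : pr D (a :: l) = D.emb a * pr D l := by
  simp [pr]

lemma pr_append (l₁ l₂ : List P) : pr D (l₁ ++ l₂) = pr D l₁ * pr D l₂ := by
  simp [pr]

lemma basis_eq_pr (σ : SL P) : D.basis σ = pr D σ.1 := D.basis_eq σ

lemma emb_eq_basis (x : P) : D.emb x = D.basis ⟨[x], List.pairwise_singleton _ x⟩ := by
  rw [basis_eq_pr]; simp [pr]

noncomputable def goodSpan (p : SL P → Prop) : Submodule B A :=
  Submodule.span B {x | ∃ σ, p σ ∧ x = D.basis σ}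

lemma mem_goodSpan_of_supp {p : SL P → Prop} {x : A}
    (h : ∀ σ ∈ (D.basis.repr x).support, p σ) : x ∈ goodSpan D p := by
  rw [← Module.Basis.linearCombination_repr D.basis x, Finsupp.linearCombination_apply]
  exact Submodule.sum_mem _ fun σ hσ =>
    Submodule.smul_mem _ _ (Submodule.subset_span ⟨σ, h σ hσ, rfl⟩)

lemma supp_subset_of_mem_goodSpan {p : SL P → Prop} {x : A} (h : x ∈ goodSpan D p) :
    ∀ σ ∈ (D.basis.repr x).support, p σ := by
  classical
  let N : Submodule B A :=
    { carrier := {y | ∀ σ ∈ (D.basis.repr y).support, p σ}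
      add_mem' := by
        intro a b ha hb σ hσ
        rw [map_add] at hσ
        rcases Finset.mem_union.1 (Finsupp.support_add hσ) with h' | h'
        · exact ha σ h'
        · exact hb σ h'
      zero_mem' := by
        intro σ hσ
        rw [map_zero] at hσ
        simp at hσ
      smul_mem' := by
        intro c y hy σ hσ
        rw [map_smul] at hσ
        exact hy σ (Finsupp.support_smul hσ) }
  have hle : goodSpan D p ≤ N := by
    rw [goodSpan, Submodule.span_le]
    rintro y ⟨σ, hσ, rfl⟩ τ hτ
    rw [Module.Basis.repr_self] at hτ
    have := Finsupp.support_single_subset hτ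
    rw [Finset.mem_singleton] at this
    subst this
    exact hσ
  exact hle h

lemma goodSpan_mono {p q : SL P → Prop} (h : ∀ σ, p σ → q σ) :
    goodSpan D p ≤ goodSpan D q :=
  Submodule.span_mono (by rintro x ⟨σ, hσ, rfl⟩; exact ⟨σ, h σ hσ, rfl⟩)

lemma mul_goodSpan {p : SL P → Prop} (z : A) (T : Submodule B A)
    (h : ∀ σ, p σ → z * D.basis σ ∈ T) : ∀ y ∈ goodSpan D p, z * y ∈ T := by
  intro y hy
  refine Submodule.span_induction ?_ ?_ ?_ ?_ hy
  · rintro x ⟨σ, hσ, rfl⟩; exact h σ hσ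
  · rw [mul_zero]; exact zero_mem T
  · intro a b _ _ ha hb; rw [mul_add]; exact add_mem ha hb
  · intro c x _ hx; rw [mul_smul_comm]; exact Submodule.smul_mem _ _ hx

lemma mul_all_basis (z : A) (T : Submodule B A) (h : ∀ σ : SL P, z * D.basis σ ∈ T)
    (y : A) : z * y ∈ T :=
  mul_goodSpan D z T (p := fun _ => True) (fun σ _ => h σ) y
    (mem_goodSpan_of_supp D (fun _ _ => trivial))

lemma straighten_mem (α β : P) (z : A) (T : Submodule B A)
    (h : ∀ ν ∈ (D.basis.repr (D.emb α * D.emb β)).support, D.basis ν * z ∈ T) :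
    D.emb α * D.emb β * z ∈ T := by
  have heq : D.emb α * D.emb β * z
      = (D.basis.repr (D.emb α * D.emb β)).sum fun ν c => c • (D.basis ν * z) := by
    conv_lhs => rw [← Module.Basis.linearCombination_repr D.basis (D.emb α * D.emb β)]
    rw [Finsupp.linearCombination_apply, Finsupp.sum_mul]
    simp only [smul_mul_assoc]
  rw [heq]
  exact Submodule.sum_mem _ fun ν hν => Submodule.smul_mem _ _ (h ν hν)

end Basis

section Main

variable {P B A : Type*} [PartialOrder P] [Fintype P] [CommRing B] [CommRing A] [Algebra B A]
variable (D : ASLData P B A) (Ω : Set P)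

lemma basis_mk_eq (l : List P) (hl : l.Pairwise (· ≤ ·)) :
    D.basis ⟨l, hl⟩ = pr D l := D.basis_eq _

noncomputable abbrev Mspan (v : ℕ) (c : P) : Submodule B A :=
  goodSpan D (fun σ => v ≤ countIn Ω σ.1 ∧ ∃ h : σ.1 ≠ [], σ.1.head h ≤ c)

noncomputable abbrev Sspan (v : ℕ) : Submodule B A :=
  goodSpan D (fun σ => v ≤ countIn Ω σ.1)

lemma Mspan_le_Sspan (v : ℕ) (c : P) : Mspan D Ω v c ≤ Sspan D Ω v :=
  goodSpan_mono D (fun _ h => h.1)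

lemma Mspan_mono_c {v : ℕ} {c c' : P} (h : c ≤ c') : Mspan D Ω v c ≤ Mspan D Ω v c' :=
  goodSpan_mono D (fun _ ⟨h1, hne, h2⟩ => ⟨h1, hne, le_trans h2 h⟩)

lemma basis_mem_Mspan {v : ℕ} {c : P} {l : List P} (hl : l.Pairwise (· ≤ ·))
    (hv : v ≤ countIn Ω l) (hne : l ≠ []) (hh : l.head hne ≤ c) :
    D.basis ⟨l, hl⟩ ∈ Mspan D Ω v c :=
  Submodule.subset_span ⟨⟨l, hl⟩, ⟨hv, hne, hh⟩, rfl⟩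

lemma sorted_head_le {a : P} {t : List P} (hs : (a :: t).Pairwise (· ≤ ·)) {ζ : P}
    (hζ : ζ ∈ a :: t) : a ≤ ζ := by
  rcases List.mem_cons.1 hζ with rfl | h
  · exact le_rfl
  · exact (List.pairwise_cons.1 hs).1 ζ h

lemma countIn_nil : countIn Ω ([] : List P) = 0 := rfl

lemma ne_nil_of_countIn_pos {l : List P} (h : 0 < countIn Ω l) : l ≠ [] := by
  have := countIn_le_length Ω l
  exact List.length_pos_iff.1 (by omega)

lemma junk_mul {v : ℕ} {c : P}
    (hF : ∀ (y : P) (σ : SL P) (hne : σ.1 ≠ []), v ≤ countIn Ω σ.1 →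
      σ.1.head hne ≤ c → D.emb y * D.basis σ ∈ Mspan D Ω v c) :
    ∀ (ρ : List P) (z : A), z ∈ Mspan D Ω v c → pr D ρ * z ∈ Mspan D Ω v c := by
  intro ρ
  induction ρ with
  | nil => intro z hz; simpa using hz
  | cons y ρ' ih =>
    intro z hz
    have h2 := ih z hz
    have heq : pr D (y :: ρ') * z = D.emb y * (pr D ρ' * z) := by
      rw [pr_cons]; ring
    rw [heq]
    exact mul_goodSpan D (D.emb y) (Mspan D Ω v c)
      (fun σ hσ => hF y σ hσ.2.1 hσ.1 hσ.2.2) _ h2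

variable {Ω}
variable (hid : ∀ x ∈ Ω, ∀ y, y ≤ x → y ∈ Ω)
variable (hsc : ∀ δ ∈ Ω, ∀ τ ∈ Ω, ¬ δ ≤ τ → ¬ τ ≤ δ →
      ∀ μ ∈ (D.basis.repr (D.emb δ * D.emb τ)).support, 2 ≤ countIn Ω μ.1)

include hid hsc in
lemma EF (n : ℕ) :
    (∀ (w : ℕ) (ω : P) (κ : SL P), ω ∈ Ω → w ≤ countIn Ω κ.1 →
      2 * (w * (Fintype.card P + 1) + rk ω) ≤ n →
      D.emb ω * D.basis κ ∈ Mspan D Ω (w + 1) ω)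
    ∧ (∀ (v : ℕ) (x : P) (lam : SL P) (hne : lam.1 ≠ []), 1 ≤ v → v ≤ countIn Ω lam.1 →
      2 * ((v - 1) * (Fintype.card P + 1) + rk (lam.1.head hne)) + 1 ≤ n →
      D.emb x * D.basis lam ∈ Mspan D Ω v (lam.1.head hne)) := by
  induction n using Nat.strongRecOn with
  | ind n IH =>
  set RP : ℕ := Fintype.card P + 1 with hRPdef
  have hRP1 : 1 ≤ RP := by omega
  have hrkb : ∀ z : P, rk z < RP := fun z => rk_lt_bound z
  have hE : ∀ (w : ℕ) (ω : P) (κ : SL P), ω ∈ Ω → w ≤ countIn Ω κ.1 →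
      2 * (w * RP + rk ω) < n →
      D.emb ω * D.basis κ ∈ Mspan D Ω (w + 1) ω :=
    fun w ω κ h1 h2 h3 => (IH _ h3).1 w ω κ h1 h2 le_rfl
  have hF : ∀ (v : ℕ) (x : P) (lam : SL P) (hne : lam.1 ≠ []), 1 ≤ v →
      v ≤ countIn Ω lam.1 →
      2 * ((v - 1) * RP + rk (lam.1.head hne)) + 1 < n →
      D.emb x * D.basis lam ∈ Mspan D Ω v (lam.1.head hne) :=
    fun v x lam hne h1 h2 h3 => (IH _ h3).2 v x lam hne h1 h2 le_rfl
  constructor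
  · -- E part
    rintro w ω ⟨κl, hκs⟩ hω hcnt hn
    rcases κl with _ | ⟨κ0, κ'⟩
    · -- κ = []
      have hcnt' : w ≤ countIn Ω ([] : List P) := hcnt
      have hw : w = 0 := by rw [countIn_nil] at hcnt'; omega
      subst hw
      have heq : D.emb ω * D.basis ⟨([] : List P), hκs⟩
          = D.basis ⟨[ω], List.pairwise_singleton _ ω⟩ := by
        rw [basis_mk_eq, basis_mk_eq, pr_cons, pr_nil]
      rw [heq]
      refine basis_mem_Mspan D Ω _ ?_ (by simp) le_rfl
      rw [countIn_cons_of_mem Ω hω, countIn_nil]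
    · have hcnt' : w ≤ countIn Ω (κ0 :: κ') := hcnt
      have hκ's : κ'.Pairwise (· ≤ ·) := (List.pairwise_cons.1 hκs).2
      have hκ0le : ∀ b ∈ κ', κ0 ≤ b := (List.pairwise_cons.1 hκs).1
      by_cases hle : ω ≤ κ0
      · -- case (a)
        have hsort : (ω :: κ0 :: κ').Pairwise (· ≤ ·) := by
          rw [List.pairwise_cons]
          refine ⟨?_, hκs⟩
          intro b hb
          rcases List.mem_cons.1 hb with rfl | hb'
          · exact hle
          · exact le_trans hle (hκ0le b hb')
        have heq : D.emb ω * D.basis ⟨κ0 :: κ', hκs⟩ = D.basis ⟨ω :: κ0 :: κ', hsort⟩ := by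
          simp only [basis_mk_eq, pr_cons]
        rw [heq]
        refine basis_mem_Mspan D Ω _ ?_ (by simp) le_rfl
        rw [countIn_cons_of_mem Ω hω]
        omega
      · by_cases hge : κ0 ≤ ω
        · -- case (b) : κ0 < ω
          have hκ0Ω : κ0 ∈ Ω := hid ω hω κ0 hge
          have hlt : κ0 < ω := lt_of_le_of_ne hge (fun h => hle (le_of_eq h.symm))
          have hrk : rk κ0 < rk ω := rk_lt_rk hlt
          have heq : D.emb ω * D.basis ⟨κ0 :: κ', hκs⟩
              = D.emb κ0 * (D.emb ω * D.basis ⟨κ', hκ's⟩) := by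
            simp only [basis_mk_eq, pr_cons]; ring
          rw [heq]
          rcases w with _ | w'
          · -- w = 0
            have hn' : 2 * rk ω ≤ n := by
              have : 0 * RP + rk ω = rk ω := by ring
              rw [this] at hn; exact hn
            have key : ∀ τ : SL P, D.emb κ0 * D.basis τ ∈ Mspan D Ω 1 κ0 := by
              intro τ
              have := hE 0 κ0 τ hκ0Ω (Nat.zero_le _) (by
                have e : 0 * RP + rk κ0 = rk κ0 := by ring
                rw [e]; omega)
              simpa using this
            have h2 : D.emb κ0 * (D.emb ω * D.basis ⟨κ', hκ's⟩) ∈ Mspan D Ω 1 κ0 :=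
              mul_all_basis D _ _ key _
            exact Mspan_mono_c D Ω (le_of_lt hlt) h2
          · -- w = w'+1
            have hcntκ' : w' ≤ countIn Ω κ' := by
              have := countIn_cons_le Ω κ0 κ'; omega
            have hmul : (w' + 1) * RP = w' * RP + RP := by ring
            have hy : D.emb ω * D.basis ⟨κ', hκ's⟩ ∈ Mspan D Ω (w' + 1) ω :=
              hE w' ω ⟨κ', hκ's⟩ hω hcntκ' (by linarith only [hn, hmul, hRP1])
            have h2 : D.emb κ0 * (D.emb ω * D.basis ⟨κ', hκ's⟩) ∈ Mspan D Ω (w' + 2) κ0 := by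
              refine mul_goodSpan D (D.emb κ0) _ ?_ _ hy
              rintro σ ⟨hcσ, hneσ, hhσ⟩
              exact hE (w' + 1) κ0 σ hκ0Ω hcσ (by linarith only [hn, hrk])
            exact Mspan_mono_c D Ω (le_of_lt hlt) h2
        · -- case (c) : incomparable
          have heq : D.emb ω * D.basis ⟨κ0 :: κ', hκs⟩
              = D.emb ω * D.emb κ0 * pr D κ' := by
            rw [basis_mk_eq, pr_cons]; ring
          rw [heq]
          refine straighten_mem D ω κ0 (pr D κ') _ ?_
          rintro ⟨νl, hνs⟩ hν
          obtain ⟨ζ, hζmem0, hζω, hζκ0⟩ := D.straighten ω κ0 hle hge _ hν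
          have hζmem : ζ ∈ νl := hζmem0
          rcases νl with _ | ⟨a, t⟩
          · exact absurd hζmem (List.not_mem_nil)
          · have haζ : a ≤ ζ := sorted_head_le hνs hζmem
            have hζΩ : ζ ∈ Ω := hid ω hω ζ hζω
            have haΩ : a ∈ Ω := hid ζ hζΩ a haζ
            have haω : a ≤ ω := le_trans haζ hζω
            have hane : a ≠ ω := by
              rintro rfl
              exact hle (le_trans haζ hζκ0)
            have hrka : rk a < rk ω := rk_lt_rk (lt_of_le_of_ne haω hane)
            rw [basis_mk_eq]
            rcases w with _ | w'
            · -- w = 0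
              have hn' : 2 * rk ω ≤ n := by
                have e : 0 * RP + rk ω = rk ω := by ring
                rw [e] at hn; exact hn
              have inner : D.emb a * D.basis ⟨κ', hκ's⟩ ∈ Mspan D Ω 1 a := by
                have := hE 0 a ⟨κ', hκ's⟩ haΩ (Nat.zero_le _) (by
                  have e : 0 * RP + rk a = rk a := by ring
                  rw [e]; omega)
                simpa using this
              have hjunk : pr D t * (D.emb a * D.basis ⟨κ', hκ's⟩) ∈ Mspan D Ω 1 a := by
                refine junk_mul D Ω ?_ t _ inner
                intro y σ hneσ hcσ hhσ
                have hrkσ : rk (σ.1.head hneσ) ≤ rk a := rk_le_rk hhσ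
                have := hF 1 y σ hneσ le_rfl hcσ (by
                  have e : (1 - 1) * RP + rk (σ.1.head hneσ) = rk (σ.1.head hneσ) := by
                    norm_num
                  rw [e]; omega)
                exact Mspan_mono_c D Ω hhσ this
              have heq2 : pr D (a :: t) * pr D κ'
                  = pr D t * (D.emb a * D.basis ⟨κ', hκ's⟩) := by
                rw [basis_mk_eq, pr_cons]; ring
              rw [heq2]
              exact Mspan_mono_c D Ω haω hjunk
            · -- w = w'+1
              have hκ0Ω : κ0 ∈ Ω := head_mem_of_countIn_pos hid hκs (by omega)
              have hν2 : 2 ≤ countIn Ω (a :: t) :=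
                hsc ω hω κ0 hκ0Ω hle hge ⟨a :: t, hνs⟩ hν
              rcases t with _ | ⟨b, t'⟩
              · exfalso
                have h1 := countIn_le_length Ω [a]
                simp at h1; omega
              · have hbt's : (b :: t').Pairwise (· ≤ ·) := (List.pairwise_cons.1 hνs).2
                have hbΩ : b ∈ Ω := by
                  refine head_mem_of_countIn_pos hid hbt's ?_
                  have := countIn_cons_le Ω a (b :: t')
                  omega
                have hcntκ' : w' ≤ countIn Ω κ' := by
                  have := countIn_cons_le Ω κ0 κ'; omega
                have hmul : (w' + 1) * RP = w' * RP + RP := by ring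
                have step1 : D.emb b * D.basis ⟨κ', hκ's⟩ ∈ Mspan D Ω (w' + 1) b :=
                  hE w' b ⟨κ', hκ's⟩ hbΩ hcntκ' (by linarith only [hn, hmul, hrkb b])
                have step2 : D.emb a * (D.emb b * D.basis ⟨κ', hκ's⟩)
                    ∈ Mspan D Ω (w' + 2) a := by
                  refine mul_goodSpan D (D.emb a) _ ?_ _ step1
                  rintro σ ⟨hcσ, hneσ, hhσ⟩
                  exact hE (w' + 1) a σ haΩ hcσ (by linarith only [hn, hrka])
                have step3 : pr D t' * (D.emb a * (D.emb b * D.basis ⟨κ', hκ's⟩))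
                    ∈ Mspan D Ω (w' + 2) a := by
                  refine junk_mul D Ω ?_ t' _ step2
                  intro y σ hneσ hcσ hhσ
                  have hrkσ : rk (σ.1.head hneσ) ≤ rk a := rk_le_rk hhσ
                  have := hF (w' + 2) y σ hneσ (by omega) hcσ (by
                    have e : (w' + 2 - 1) * RP = w' * RP + RP := by
                      have : w' + 2 - 1 = w' + 1 := by omega
                      rw [this]; ring
                    rw [e]; linarith only [hn, hrkσ, hrka])
                  exact Mspan_mono_c D Ω hhσ this
                have heq2 : pr D (a :: b :: t') * pr D κ'
                    = pr D t' * (D.emb a * (D.emb b * D.basis ⟨κ', hκ's⟩)) := by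
                  rw [basis_mk_eq, pr_cons, pr_cons]; ring
                rw [heq2]
                exact Mspan_mono_c D Ω haω step3
  · -- F part
    rintro v x ⟨lamL, hlams⟩ hne h1v hcnt hn
    rcases lamL with _ | ⟨lam0, lam'⟩
    · exact absurd rfl hne
    · have hcnt' : v ≤ countIn Ω (lam0 :: lam') := hcnt
      simp only [List.head_cons] at hn ⊢
      have hlam's : lam'.Pairwise (· ≤ ·) := (List.pairwise_cons.1 hlams).2
      have hlam0le : ∀ b ∈ lam', lam0 ≤ b := (List.pairwise_cons.1 hlams).1
      have hlam0Ω : lam0 ∈ Ω := head_mem_of_countIn_pos hid hlams (by omega)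
      by_cases hxle : x ≤ lam0
      · -- case (a)
        have hsort : (x :: lam0 :: lam').Pairwise (· ≤ ·) := by
          rw [List.pairwise_cons]
          refine ⟨?_, hlams⟩
          intro b hb
          rcases List.mem_cons.1 hb with rfl | hb'
          · exact hxle
          · exact le_trans hxle (hlam0le b hb')
        have heq : D.emb x * D.basis ⟨lam0 :: lam', hlams⟩ = D.basis ⟨x :: lam0 :: lam', hsort⟩ := by
          simp only [basis_mk_eq, pr_cons]
        rw [heq]
        refine basis_mem_Mspan D Ω _ ?_ (by simp) hxle
        exact le_trans hcnt' (le_countIn_cons Ω x (lam0 :: lam'))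
      · by_cases hgex : lam0 ≤ x
        · -- case (b) : lam0 < x
          have heq : D.emb x * D.basis ⟨lam0 :: lam', hlams⟩
              = D.emb lam0 * (D.emb x * D.basis ⟨lam', hlam's⟩) := by
            simp only [basis_mk_eq, pr_cons]; ring
          rw [heq]
          rcases v with _ | v'
          · omega
          · rcases v' with _ | v''
            · -- v = 1
              have hn' : 2 * rk lam0 + 1 ≤ n := by
                have e : (1 - 1) * RP + rk lam0 = rk lam0 := by norm_num
                rw [e] at hn; exact hn
              have key : ∀ τ : SL P, D.emb lam0 * D.basis τ ∈ Mspan D Ω 1 lam0 := by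
                intro τ
                have := hE 0 lam0 τ hlam0Ω (Nat.zero_le _) (by
                  have e : 0 * RP + rk lam0 = rk lam0 := by ring
                  rw [e]; omega)
                simpa using this
              exact mul_all_basis D _ _ key _
            · -- v = v'' + 2
              have hn' : 2 * ((v'' + 1) * RP + rk lam0) + 1 ≤ n := by
                have e : (v'' + 2 - 1) * RP = (v'' + 1) * RP := by norm_num
                rw [e] at hn; exact hn
              have hmul : (v'' + 1) * RP = v'' * RP + RP := by ring
              have hcntlam' : v'' + 1 ≤ countIn Ω lam' := by
                have := countIn_cons_le Ω lam0 lam'; omega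
              have hlam'ne : lam' ≠ [] := ne_nil_of_countIn_pos Ω (by omega)
              have inner : D.emb x * D.basis ⟨lam', hlam's⟩
                  ∈ Mspan D Ω (v'' + 1) (lam'.head hlam'ne) := by
                refine hF (v'' + 1) x ⟨lam', hlam's⟩ hlam'ne (by omega) hcntlam' ?_
                have hh := hrkb (lam'.head hlam'ne)
                have e : (v'' + 1 - 1) * RP = v'' * RP := by norm_num
                rw [e]; linarith only [hn', hmul, hh]
              refine mul_goodSpan D (D.emb lam0) _ ?_ _ inner
              rintro σ ⟨hcσ, hneσ, hhσ⟩
              exact hE (v'' + 1) lam0 σ hlam0Ω hcσ (by linarith only [hn'])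
        · -- case (c) : incomparable
          have heq : D.emb x * D.basis ⟨lam0 :: lam', hlams⟩
              = D.emb x * D.emb lam0 * pr D lam' := by
            rw [basis_mk_eq, pr_cons]; ring
          rw [heq]
          refine straighten_mem D x lam0 (pr D lam') _ ?_
          rintro ⟨νl, hνs⟩ hν
          obtain ⟨ζ, hζmem0, hζx, hζlam0⟩ := D.straighten x lam0 hxle hgex _ hν
          have hζmem : ζ ∈ νl := hζmem0
          rcases νl with _ | ⟨a, t⟩
          · exact absurd hζmem (List.not_mem_nil)
          · have haζ : a ≤ ζ := sorted_head_le hνs hζmem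
            have haΩ : a ∈ Ω := hid lam0 hlam0Ω a (le_trans haζ hζlam0)
            have halam0 : a ≤ lam0 := le_trans haζ hζlam0
            have hane : a ≠ lam0 := by
              rintro rfl
              exact hgex (le_trans haζ hζx)
            have hrka : rk a < rk lam0 := rk_lt_rk (lt_of_le_of_ne halam0 hane)
            rcases v with _ | v'
            · omega
            · have hn' : 2 * (v' * RP + rk lam0) + 1 ≤ n := by
                have e : (v' + 1 - 1) * RP = v' * RP := by norm_num
                rw [e] at hn; exact hn
              have hcntlam' : v' ≤ countIn Ω lam' := by
                have := countIn_cons_le Ω lam0 lam'; omega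
              have inner : D.emb a * D.basis ⟨lam', hlam's⟩ ∈ Mspan D Ω (v' + 1) a := by
                refine hE v' a ⟨lam', hlam's⟩ haΩ hcntlam' ?_
                linarith only [hn', hrka]
              have hjunk : pr D t * (D.emb a * D.basis ⟨lam', hlam's⟩)
                  ∈ Mspan D Ω (v' + 1) a := by
                refine junk_mul D Ω ?_ t _ inner
                intro y σ hneσ hcσ hhσ
                have hrkσ : rk (σ.1.head hneσ) ≤ rk a := rk_le_rk hhσ
                have := hF (v' + 1) y σ hneσ (by omega) hcσ (by
                  have e : (v' + 1 - 1) * RP = v' * RP := by norm_num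
                  rw [e]; linarith only [hn', hrkσ, hrka])
                exact Mspan_mono_c D Ω hhσ this
              have heq2 : pr D (a :: t) * pr D lam'
                  = pr D t * (D.emb a * D.basis ⟨lam', hlam's⟩) := by
                rw [basis_mk_eq, pr_cons]; ring
              rw [basis_mk_eq, heq2]
              exact Mspan_mono_c D Ω halam0 hjunk

end Main

section Down

variable {P B A : Type*} [PartialOrder P] [Fintype P] [CommRing B] [CommRing A] [Algebra B A]
variable (D : ASLData P B A) {Ω : Set P}
variable (hid : ∀ x ∈ Ω, ∀ y, y ≤ x → y ∈ Ω)
variable (hsc : ∀ δ ∈ Ω, ∀ τ ∈ Ω, ¬ δ ≤ τ → ¬ τ ≤ δ →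
      ∀ μ ∈ (D.basis.repr (D.emb δ * D.emb τ)).support, 2 ≤ countIn Ω μ.1)

lemma pr_take_drop (l : List P) (k : ℕ) :
    pr D l = pr D (l.take k) * pr D (l.drop k) := by
  conv_lhs => rw [← List.take_append_drop k l]
  rw [pr_append]

include hid hsc

lemma Efin (w : ℕ) (ω : P) (κ : SL P) (hω : ω ∈ Ω) (hc : w ≤ countIn Ω κ.1) :
    D.emb ω * D.basis κ ∈ Mspan D Ω (w + 1) ω :=
  (EF D hid hsc (2 * (w * (Fintype.card P + 1) + rk ω))).1 w ω κ hω hc le_rfl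

lemma Ffin (v : ℕ) (x : P) (lam : SL P) (hne : lam.1 ≠ []) (h1 : 1 ≤ v)
    (hc : v ≤ countIn Ω lam.1) :
    D.emb x * D.basis lam ∈ Mspan D Ω v (lam.1.head hne) :=
  (EF D hid hsc (2 * ((v - 1) * (Fintype.card P + 1) + rk (lam.1.head hne)) + 1)).2
    v x lam hne h1 hc le_rfl

lemma emb_mul_S {w : ℕ} {ω : P} (hω : ω ∈ Ω) {y : A} (hy : y ∈ Sspan D Ω w) :
    D.emb ω * y ∈ Sspan D Ω (w + 1) := by
  refine mul_goodSpan D (D.emb ω) _ ?_ _ hy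
  intro σ hσ
  exact Mspan_le_Sspan D Ω _ _ (Efin D hid hsc w ω σ hω hσ)

lemma mul_S (z : A) {w : ℕ} {y : A} (hy : y ∈ Sspan D Ω w) : z * y ∈ Sspan D Ω w := by
  rcases w with _ | w'
  · exact mem_goodSpan_of_supp D (fun σ _ => Nat.zero_le _)
  · have key : ∀ σ : SL P, (w' + 1) ≤ countIn Ω σ.1 → z * D.basis σ ∈ Sspan D Ω (w' + 1) := by
      intro σ hσ
      have hne : σ.1 ≠ [] := ne_nil_of_countIn_pos Ω (by omega)
      have hmem : D.basis σ ∈ Mspan D Ω (w' + 1) (σ.1.head hne) := by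
        rcases σ with ⟨l, hl⟩
        exact basis_mem_Mspan D Ω hl hσ _ le_rfl
      have hFd : ∀ (y' : P) (σ' : SL P) (hne' : σ'.1 ≠ []), (w' + 1) ≤ countIn Ω σ'.1 →
          σ'.1.head hne' ≤ σ.1.head hne →
          D.emb y' * D.basis σ' ∈ Mspan D Ω (w' + 1) (σ.1.head hne) :=
        fun y' σ' hne' hc' hh' =>
          Mspan_mono_c D Ω hh' (Ffin D hid hsc (w' + 1) y' σ' hne' (by omega) hc')
      have hjm := junk_mul D Ω hFd
      -- expand z over the basis
      have hz : z * D.basis σ ∈ Mspan D Ω (w' + 1) (σ.1.head hne) := by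
        have hcomm : ∀ τ : SL P, D.basis σ * D.basis τ ∈ Mspan D Ω (w' + 1) (σ.1.head hne) := by
          intro τ
          have := hjm τ.1 (D.basis σ) hmem
          rw [show D.basis σ * D.basis τ = pr D τ.1 * D.basis σ by
            rw [basis_eq_pr D τ]; ring]
          exact this
        have := mul_all_basis D (D.basis σ) _ hcomm z
        rwa [mul_comm] at this
      exact Mspan_le_Sspan D Ω _ _ hz
    exact mul_goodSpan D z _ (fun σ hσ => key σ hσ) y hy

omit hsc in
lemma chain_mem_pow {l : List P} (h : ∀ y ∈ l, y ∈ Ω) :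
    pr D l ∈ (Ideal.span (D.emb '' Ω)) ^ l.length := by
  induction l with
  | nil =>
    rw [List.length_nil, pow_zero, Ideal.one_eq_top]
    exact Submodule.mem_top
  | cons a t ih =>
    have h1 : pr D t ∈ (Ideal.span (D.emb '' Ω)) ^ t.length :=
      ih (fun y hy => h y (List.mem_cons_of_mem a hy))
    have h2 : D.emb a ∈ Ideal.span (D.emb '' Ω) :=
      Ideal.subset_span ⟨a, h a (List.mem_cons_self), rfl⟩
    have : pr D (a :: t) = pr D t * D.emb a := by rw [pr_cons]; ring
    rw [this, List.length_cons, pow_succ]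
    exact Ideal.mul_mem_mul h1 h2

omit hsc in
lemma S_le_pow {w : ℕ} {x : A} (hx : x ∈ Sspan D Ω w) :
    x ∈ (Ideal.span (D.emb '' Ω)) ^ w := by
  have hle : Sspan D Ω w ≤ Submodule.restrictScalars B ((Ideal.span (D.emb '' Ω)) ^ w) := by
    refine Submodule.span_le.2 ?_
    rintro y ⟨⟨l, hl⟩, hσ, rfl⟩
    show D.basis ⟨l, hl⟩ ∈ (Ideal.span (D.emb '' Ω)) ^ w
    have hwlen : w ≤ l.length := le_trans hσ (countIn_le_length Ω l)
    have htake : ∀ y ∈ l.take w, y ∈ Ω := mem_take_of_le_countIn hid hl hσ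
    have h1 : pr D (l.take w) ∈ (Ideal.span (D.emb '' Ω)) ^ w := by
      have := chain_mem_pow D hid htake
      rwa [List.length_take, min_eq_left hwlen] at this
    rw [basis_mk_eq, pr_take_drop D l w]
    exact Ideal.mul_mem_right _ _ h1
  exact hle hx

lemma pow_le_S : ∀ (w : ℕ) (x : A), x ∈ (Ideal.span (D.emb '' Ω)) ^ w → x ∈ Sspan D Ω w := by
  intro w
  induction w with
  | zero => exact fun x _ => mem_goodSpan_of_supp D (fun σ _ => Nat.zero_le _)
  | succ w ih =>
    intro x hx
    rw [pow_succ] at hx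
    refine Submodule.mul_induction_on hx ?_ ?_
    · intro mm hmm nn hnn
      have hmS : mm ∈ Sspan D Ω w := ih mm hmm
      refine Submodule.span_induction ?_ ?_ ?_ ?_ hnn
      · rintro y ⟨ω, hω, rfl⟩
        rw [mul_comm]
        exact emb_mul_S D hid hsc hω hmS
      · rw [mul_zero]; exact zero_mem _
      · intro a b _ _ ha hb; rw [mul_add]; exact add_mem ha hb
      · intro a y _ hy
        rw [smul_eq_mul, show mm * (a * y) = a * (mm * y) by ring]
        exact mul_S D hid hsc a hy
    · intro a b ha hb; exact add_mem ha hb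

end Down

end ASLHelp


open ASLHelp in
/-- For straightening-closed poset ideals `Ω_1,...,Ω_m` of `P` with `I_i = AΩ_i` and
`u_1,...,u_m ∈ ℕ` with `U = max u_i`, the ideal `I_1^{u_1} ∩ ... ∩ I_m^{u_m}` is generated
by the standard monomials `ξ_1 ξ_2 ⋯ ξ_U` (`ξ_1 ≤ ... ≤ ξ_U`) with `ξ_1,...,ξ_{u_i} ∈ Ω_i`
for each `i`. (These generators all have length `U`, so for a homogeneous ASL the
intersection is generated in degree `U`.) -/
theorem stmt_13 {P B A : Type*} [PartialOrder P] [Fintype P] [CommRing B] [CommRing A]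
    [Algebra B A] (D : ASLData P B A) (m : ℕ) (hm : 0 < m) (Ω : Fin m → Set P)
    -- each Ω i is a poset ideal
    (hideal : ∀ i, ∀ x ∈ Ω i, ∀ y, y ≤ x → y ∈ Ω i)
    -- each Ω i is straightening-closed
    (hsc : ∀ i, ∀ δ ∈ Ω i, ∀ τ ∈ Ω i, ¬ δ ≤ τ → ¬ τ ≤ δ →
      ∀ μ ∈ (D.basis.repr (D.emb δ * D.emb τ)).support, 2 ≤ countIn (Ω i) μ.1)
    (u : Fin m → ℕ) (U : ℕ) (hU : IsGreatest (Set.range u) U) :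
    (⨅ i, (Ideal.span (D.emb '' Ω i)) ^ (u i)) =
      Ideal.span {x : A | ∃ l : List P, l.Pairwise (· ≤ ·) ∧ l.length = U ∧
        (∀ i : Fin m, ∀ j, j < u i → ∀ (h : j < l.length), l.get ⟨j, h⟩ ∈ Ω i) ∧
        x = (l.map D.emb).prod} := by
  obtain ⟨i0, hi0⟩ := hU.1
  apply le_antisymm
  · -- hard direction
    intro x hx
    have hxi : ∀ i, x ∈ Sspan D (Ω i) (u i) := by
      intro i
      exact pow_le_S D (hideal i) (hsc i) (u i) x ((Submodule.mem_iInf _).1 hx i)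
    have hsupp : ∀ σ ∈ (D.basis.repr x).support, ∀ i, u i ≤ countIn (Ω i) σ.1 :=
      fun σ hσ i => supp_subset_of_mem_goodSpan D (hxi i) σ hσ
    have hxg : x ∈ goodSpan D (fun σ => ∀ i, u i ≤ countIn (Ω i) σ.1) :=
      mem_goodSpan_of_supp D hsupp
    have hle : goodSpan D (fun σ => ∀ i, u i ≤ countIn (Ω i) σ.1) ≤
        Submodule.restrictScalars B (Ideal.span {x : A | ∃ l : List P,
          l.Pairwise (· ≤ ·) ∧ l.length = U ∧
          (∀ i : Fin m, ∀ j, j < u i → ∀ (h : j < l.length), l.get ⟨j, h⟩ ∈ Ω i) ∧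
          x = (l.map D.emb).prod}) := by
      refine Submodule.span_le.2 ?_
      rintro y ⟨⟨l, hl⟩, hσ, rfl⟩
      show D.basis ⟨l, hl⟩ ∈ Ideal.span _
      have hUlen : U ≤ l.length := by
        have h1 : u i0 ≤ countIn (Ω i0) l := hσ i0
        have h2 := countIn_le_length (Ω i0) l
        omega
      rw [basis_mk_eq, pr_take_drop D l U]
      refine Ideal.mul_mem_right _ _ (Ideal.subset_span ?_)
      refine ⟨l.take U, List.Pairwise.sublist (List.take_sublist U l) hl, ?_, ?_, rfl⟩
      · rw [List.length_take, min_eq_left hUlen]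
      · intro i j hj h
        have hjl : j < l.length := by
          have := List.length_take (i := U) (l := l)
          omega
        have hget : (l.take U).get ⟨j, h⟩ = l.get ⟨j, hjl⟩ := by
          simp only [List.get_eq_getElem]
          exact List.getElem_take
        rw [hget]
        refine get_mem_of_lt_countIn (hideal i) l hl j hjl ?_
        exact lt_of_lt_of_le hj (hσ i)
    exact hle hxg
  · -- easy direction
    refine Ideal.span_le.2 ?_
    rintro x ⟨l, hsort, hlen, hcond, rfl⟩
    simp only [SetLike.mem_coe, Submodule.mem_iInf]
    intro i
    have hui : u i ≤ U := hU.2 ⟨i, rfl⟩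
    have htake : ∀ y ∈ l.take (u i), y ∈ Ω i := by
      intro y hy
      obtain ⟨j, hjlen, hj⟩ := List.getElem_of_mem hy
      have hjui : j < u i := by
        have := List.length_take (i := u i) (l := l)
        omega
      have hjl : j < l.length := by omega
      rw [List.getElem_take] at hj
      subst hj
      have := hcond i j hjui hjl
      simpa [List.get_eq_getElem] using this
    have h1 : pr D (l.take (u i)) ∈ (Ideal.span (D.emb '' Ω i)) ^ (u i) := by
      have := chain_mem_pow D (hideal i) htake
      rwa [List.length_take, min_eq_left (by omega : u i ≤ l.length)] at this
    show pr D l ∈ _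
    rw [pr_take_drop D l (u i)]
    exact Ideal.mul_mem_right _ _ h1
end

section
/- Let γ = [a_1,...,a_d] with 1 ≤ a_1 < ... < a_d ≤ n, and let Γ(γ) = {δ : δ ≥ γ} be the set of strictly increasing d-tuples in {1,...,n} componentwise at least γ. The elements covering γ in Γ(γ) (equivalently, in the full lattice Γ) are exactly the tuples ζ_i obtained from γ by increasing by 1 the last entry of the i-th maximal block β_i of consecutive integers, for those blocks whose last entry can be increased (i.e., for 0 ≤ i ≤ t, where t = s if a_d < n and t = s-1 if a_d = n). -/
/-- The set of strictly increasing `d`-tuples with entries in `{1,...,n}`,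
ordered componentwise (as a subtype of `Fin d → ℕ`). -/
abbrev GammaSet (n d : ℕ) := {a : Fin d → ℕ // StrictMono a ∧ ∀ i, 1 ≤ a i ∧ a i ≤ n}

private lemma sm_grow {d : ℕ} {f : Fin d → ℕ} (hf : StrictMono f) :
    ∀ m : ℕ, ∀ i : Fin d, ∀ h : (i : ℕ) + m < d, f i + m ≤ f ⟨(i : ℕ) + m, h⟩ := by
  intro m
  induction m with
  | zero => intro i h; simp
  | succ m ih =>
    intro i h
    have h' : (i : ℕ) + m < d := by omega
    have h1 := ih i h'
    have hlt : f ⟨(i : ℕ) + m, h'⟩ < f ⟨(i : ℕ) + m + 1, by omega⟩ :=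
      hf (by simp [Fin.lt_def])
    have : f ⟨(i : ℕ) + m + 1, by omega⟩ = f ⟨(i : ℕ) + (m + 1), h⟩ := rfl
    omega

/-- `δ` covers `γ` in `Γ` (equivalently in `Γ(γ) = {δ : δ ≥ γ}`) iff `δ` is obtained from
`γ` by increasing by 1 the last entry of a maximal block of consecutive integers of `γ`
whose last entry is less than `n` (so that it can be increased). 0-based indexing:
index `j` is the last entry of its block iff `j = d-1` or `γ_{j+1} > γ_j + 1`. -/
theorem stmt_14 (n d : ℕ) (hd : 1 ≤ d) (hdn : d ≤ n)
    (γ δ : GammaSet n d) :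
    γ ⋖ δ ↔ ∃ j : Fin d, δ.1 j = γ.1 j + 1 ∧ (∀ i, i ≠ j → δ.1 i = γ.1 i) ∧
      γ.1 j < n ∧
      ((j : ℕ) = d - 1 ∨ ∀ (h : (j : ℕ) + 1 < d), γ.1 j + 1 < γ.1 ⟨(j : ℕ) + 1, h⟩) := by
  obtain ⟨hg, hgb⟩ := γ.2
  obtain ⟨hf, hfb⟩ := δ.2
  constructor
  · rintro ⟨hlt, hmax⟩
    have hlt' : γ.1 < δ.1 := hlt
    have hle : γ.1 ≤ δ.1 := hlt'.le
    obtain ⟨hle', i0, hi0⟩ := Pi.lt_def.mp hlt'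
    -- the set of indices in the block of i0 (at or after i0)
    set F : Finset (Fin d) :=
      Finset.univ.filter (fun k : Fin d => (i0 : ℕ) ≤ k ∧ γ.1 k = γ.1 i0 + ((k : ℕ) - i0))
      with hF
    have hi0F : i0 ∈ F := by simp [hF]
    set j : Fin d := F.max' ⟨i0, hi0F⟩ with hj
    have hjF : j ∈ F := F.max'_mem _
    obtain ⟨-, hi0j, hgj⟩ := Finset.mem_filter.mp hjF
    -- block end property
    have hblock : ∀ (h : (j : ℕ) + 1 < d), γ.1 j + 1 < γ.1 ⟨(j : ℕ) + 1, h⟩ := by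
      intro h
      by_contra hc
      push_neg at hc
      have hlt2 : γ.1 j < γ.1 ⟨(j : ℕ) + 1, h⟩ := hg (by simp [Fin.lt_def])
      have heq : γ.1 ⟨(j : ℕ) + 1, h⟩ = γ.1 j + 1 := by omega
      have hmem : (⟨(j : ℕ) + 1, h⟩ : Fin d) ∈ F := by
        simp only [hF, Finset.mem_filter, Finset.mem_univ, true_and]
        constructor
        · omega
        · rw [heq, hgj]; omega
      have hle3 := F.le_max' _ hmem
      rw [← hj, Fin.le_def] at hle3
      simp only [Fin.val_mk] at hle3
      omega
    -- δ.1 j ≥ γ.1 j + 1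
    have hfj : γ.1 j + 1 ≤ δ.1 j := by
      have hd' : (i0 : ℕ) + ((j : ℕ) - i0) < d := by omega
      have h4 := sm_grow hf ((j : ℕ) - i0) i0 hd'
      have hjeq : (⟨(i0 : ℕ) + ((j : ℕ) - i0), hd'⟩ : Fin d) = j := by
        apply Fin.ext; simp; omega
      rw [hjeq] at h4
      omega
    have hgjn : γ.1 j < n := by
      have := (hfb j).2
      omega
    -- the candidate ζ
    set z : Fin d → ℕ := Function.update γ.1 j (γ.1 j + 1) with hz
    have hzj : z j = γ.1 j + 1 := by simp [hz]
    have hzi : ∀ i, i ≠ j → z i = γ.1 i := by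
      intro i hi; simp [hz, Function.update_of_ne hi]
    have hzsm : StrictMono z := by
      intro a b hab
      rcases eq_or_ne a j with ha | ha
      · -- b > j
        have hb : b ≠ j := by intro hb; rw [ha, ← hb] at hab; exact lt_irrefl _ hab
        rw [ha, hzj, hzi b hb]
        have hjb : (j : ℕ) < (b : ℕ) := by rw [← ha]; exact hab
        have hbd : (j : ℕ) + 1 < d := lt_of_le_of_lt hjb b.isLt
        have h1 := hblock hbd
        have hd2 : ((j : ℕ) + 1) + ((b : ℕ) - ((j : ℕ) + 1)) < d := by omega
        have h3 := sm_grow hg ((b : ℕ) - ((j : ℕ) + 1)) ⟨(j : ℕ) + 1, hbd⟩ (by simpa using hd2)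
        have hbeq : (⟨((j : ℕ) + 1) + ((b : ℕ) - ((j : ℕ) + 1)), by simpa using hd2⟩ : Fin d)
            = b := by
          apply Fin.ext; simp; omega
        rw [hbeq] at h3
        omega
      · rcases eq_or_ne b j with hb | hb
        · rw [hzi a ha, hb, hzj]
          have : γ.1 a < γ.1 j := hg (hb ▸ hab)
          omega
        · rw [hzi a ha, hzi b hb]
          exact hg hab
    have hzb : ∀ i, 1 ≤ z i ∧ z i ≤ n := by
      intro i
      rcases eq_or_ne i j with rfl | hi
      · rw [hzj]; exact ⟨by omega, by omega⟩
      · rw [hzi i hi]; exact hgb i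
    set ζ : GammaSet n d := ⟨z, hzsm, hzb⟩ with hζ
    have hγζ : γ < ζ := by
      apply lt_of_le_of_ne
      · show γ.1 ≤ z
        intro i
        rcases eq_or_ne i j with rfl | hi
        · rw [hzj]; exact Nat.le_succ _
        · rw [hzi i hi]
      · intro hc
        have : γ.1 j = z j := congrFun (congrArg Subtype.val hc) j
        rw [hzj] at this; omega
    have hζδ : ζ ≤ δ := by
      show z ≤ δ.1
      intro i
      rcases eq_or_ne i j with rfl | hi
      · rw [hzj]; exact hfj
      · rw [hzi i hi]; exact hle i
    have hne : ζ = δ := by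
      by_contra hc
      exact hmax hγζ (lt_of_le_of_ne hζδ hc)
    have hfz : δ.1 = z := (congrArg Subtype.val hne).symm
    refine ⟨j, ?_, ?_, hgjn, ?_⟩
    · rw [hfz, hzj]
    · intro i hi; rw [hfz, hzi i hi]
    · by_cases hjd : (j : ℕ) = d - 1
      · exact Or.inl hjd
      · exact Or.inr hblock
  · rintro ⟨j, h1, h2, h3, -⟩
    constructor
    · apply lt_of_le_of_ne
      · show γ.1 ≤ δ.1
        intro i
        rcases eq_or_ne i j with rfl | hi
        · rw [h1]; exact Nat.le_succ _
        · rw [h2 i hi]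
      · intro hc
        have : γ.1 j = δ.1 j := congrFun (congrArg Subtype.val hc) j
        omega
    · rintro ξ hγx hxδ
      have hγx' : γ.1 < ξ.1 := hγx
      have hxδ' : ξ.1 < δ.1 := hxδ
      obtain ⟨hle1, i, hi0⟩ := Pi.lt_def.mp hγx'
      have hi : γ.1 i < ξ.1 i := hi0
      have hle2 : ξ.1 ≤ δ.1 := hxδ'.le
      have hij : i = j := by
        by_contra hc
        have h5 : ξ.1 i ≤ δ.1 i := hle2 i
        rw [h2 i hc] at h5
        omega
      subst hij
      have hxeq : ξ.1 = δ.1 := by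
        funext k
        rcases eq_or_ne k i with rfl | hk
        · have h6 : ξ.1 k ≤ δ.1 k := hle2 k
          omega
        · have h6 : ξ.1 k ≤ δ.1 k := hle2 k
          have h7 : γ.1 k ≤ ξ.1 k := hle1 k
          rw [h2 k hk] at h6 ⊢
          omega
      rw [hxeq] at hxδ'
      exact lt_irrefl _ hxδ'
end

section
/- Let P(Γ(γ)) = ξ_1, ..., ξ_m be the principal chain of the distributive lattice Γ(γ) = {δ ≥ γ} (where ξ_1 = γ and ξ_{i+1} is the join of all covers of ξ_i, terminating at the maximum [n-d+1,...,n]). Then the twisted sequence ξ̃_1, ξ̃_2, ..., ξ̃_m coincides with the chain obtained by iterating the step function (decreasing by 1 each entry that is the first of a maximal consecutive block and can be decreased) starting from γ̃ and ending at [1,2,...,d]. In particular m = τ(γ̃). -/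
/-- The twist operation `ã_i = n - a_{d-i+1} + 1`. -/
def twist (n d : ℕ) (a : Fin d → ℕ) : Fin d → ℕ := fun i => n + 1 - a i.rev

namespace Stmt16

def canInc (n : ℕ) {d : ℕ} (a : Fin d → ℕ) (j : Fin d) : Prop :=
  if h : (j : ℕ) + 1 < d then a j + 1 < a ⟨(j : ℕ) + 1, h⟩ else a j < n

instance (n : ℕ) {d : ℕ} (a : Fin d → ℕ) (j : Fin d) : Decidable (canInc n a j) := by
  unfold canInc; infer_instance

def jstep (n : ℕ) {d : ℕ} (a : Fin d → ℕ) : Fin d → ℕ :=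
  fun j => if canInc n a j then a j + 1 else a j

def incAt {d : ℕ} (a : Fin d → ℕ) (j : Fin d) : Fin d → ℕ :=
  fun i => if i = j then a j + 1 else a i

/-- strict monotonicity from adjacent comparisons -/
lemma sm_succ {d : ℕ} {f : Fin d → ℕ}
    (h : ∀ (k : ℕ) (hk : k + 1 < d), f ⟨k, by omega⟩ < f ⟨k + 1, hk⟩) :
    StrictMono f := by
  have key : ∀ (j : ℕ) (hj : j < d) (i : ℕ) (hi : i < d), i < j → f ⟨i, hi⟩ < f ⟨j, hj⟩ := by
    intro j
    induction j with
    | zero => omega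
    | succ j ih =>
      intro hj i hi hij
      rcases Nat.lt_or_ge i j with h' | h'
      · exact (ih (by omega) i hi h').trans (h j hj)
      · have : i = j := by omega
        subst this; exact h i hj
  intro i j hij
  have := key j j.2 i i.2 hij
  simpa using this

lemma sm_adj {d : ℕ} {f : Fin d → ℕ} (hf : StrictMono f) (k : ℕ) (hk : k + 1 < d) :
    f ⟨k, by omega⟩ < f ⟨k + 1, hk⟩ := hf (by simp [Fin.mk_lt_mk])

lemma le_jstep {n d : ℕ} (a : Fin d → ℕ) (i : Fin d) :
    a i ≤ jstep n a i ∧ jstep n a i ≤ a i + 1 := by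
  unfold jstep; split <;> omega

lemma jstep_prop {n d : ℕ} (a : Fin d → ℕ)
    (ha : StrictMono a ∧ ∀ i, 1 ≤ a i ∧ a i ≤ n) :
    StrictMono (jstep n a) ∧ ∀ i, 1 ≤ jstep n a i ∧ jstep n a i ≤ n := by
  obtain ⟨hsm, hb⟩ := ha
  constructor
  · apply sm_succ
    intro k hk
    have hadj := sm_adj hsm k hk
    have h2 := (le_jstep (n := n) a ⟨k + 1, hk⟩).1
    by_cases hc : canInc n a ⟨k, by omega⟩
    · have he : jstep n a ⟨k, by omega⟩ = a ⟨k, by omega⟩ + 1 := if_pos hc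
      rw [canInc, dif_pos hk] at hc
      simp only [Fin.val_mk] at hc
      omega
    · have he : jstep n a ⟨k, by omega⟩ = a ⟨k, by omega⟩ := if_neg hc
      omega
  · intro i
    have h1 := (le_jstep (n := n) a i).1
    have hb1 := hb i
    refine ⟨by omega, ?_⟩
    by_cases hc : canInc n a i
    · have he : jstep n a i = a i + 1 := if_pos hc
      rw [canInc] at hc
      by_cases hi : (i : ℕ) + 1 < d
      · rw [dif_pos hi] at hc
        have := (hb ⟨(i : ℕ) + 1, hi⟩).2
        omega
      · rw [dif_neg hi] at hc; omega
    · have he : jstep n a i = a i := if_neg hc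
      omega

lemma incAt_prop {n d : ℕ} (a : Fin d → ℕ)
    (ha : StrictMono a ∧ ∀ i, 1 ≤ a i ∧ a i ≤ n) {j : Fin d} (hc : canInc n a j) :
    StrictMono (incAt a j) ∧ ∀ i, 1 ≤ incAt a j i ∧ incAt a j i ≤ n := by
  obtain ⟨hsm, hb⟩ := ha
  have hjle : a j + 1 ≤ n := by
    rw [canInc] at hc
    by_cases hi : (j : ℕ) + 1 < d
    · rw [dif_pos hi] at hc
      have := (hb ⟨(j : ℕ) + 1, hi⟩).2
      omega
    · rw [dif_neg hi] at hc; omega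
  constructor
  · apply sm_succ
    intro k hk
    have hadj := sm_adj hsm k hk
    by_cases h1 : (⟨k, by omega⟩ : Fin d) = j
    · have h2 : (⟨k + 1, hk⟩ : Fin d) ≠ j := by
        intro h; rw [← h1] at h
        exact absurd (congrArg Fin.val h) (by simp)
      rw [incAt, if_pos h1, incAt, if_neg h2]
      rw [canInc] at hc
      have hjv : (j : ℕ) = k := by rw [← h1]
      rw [dif_pos (by omega)] at hc
      have : (⟨(j : ℕ) + 1, by omega⟩ : Fin d) = ⟨k + 1, hk⟩ := by
        apply Fin.ext; simp [hjv]
      rw [this] at hc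
      exact hc
    · by_cases h2 : (⟨k + 1, hk⟩ : Fin d) = j
      · rw [incAt, if_neg h1, incAt, if_pos h2, ← h2]
        omega
      · rw [incAt, if_neg h1, incAt, if_neg h2]
        exact hadj
  · intro i
    rw [incAt]
    split
    · have := hb j; omega
    · exact hb i

lemma incAt_le_jstep {n d : ℕ} (a : Fin d → ℕ) {j : Fin d} (hc : canInc n a j) (i : Fin d) :
    incAt a j i ≤ jstep n a i := by
  rw [incAt]
  split
  · next h => rw [h, jstep, if_pos hc]
  · exact (le_jstep a i).1

end Stmt16

namespace Stmt16

variable {n d : ℕ}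

lemma gle {x y : GammaSet n d} : x ≤ y ↔ ∀ i, x.1 i ≤ y.1 i :=
  Iff.trans Subtype.coe_le_coe.symm Pi.le_def

lemma glt {x y : GammaSet n d} : x < y ↔ (∀ i, x.1 i ≤ y.1 i) ∧ x.1 ≠ y.1 := by
  rw [lt_iff_le_and_ne, gle, ne_eq, Subtype.ext_iff]

/-- `incAt` at a feasible index is a cover. -/
lemma covby_incAt (x : GammaSet n d) {j : Fin d} (hc : canInc n x.1 j) :
    x ⋖ (⟨incAt x.1 j, incAt_prop x.1 x.2 hc⟩ : GammaSet n d) := by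
  have hne : x.1 j ≠ x.1 j + 1 := by omega
  constructor
  · rw [glt]
    constructor
    · intro i
      show x.1 i ≤ incAt x.1 j i
      simp only [incAt]; split
      · next h => rw [h]; omega
      · exact le_rfl
    · show x.1 ≠ incAt x.1 j
      intro h
      have h3 : x.1 j = incAt x.1 j j := congrFun h j
      rw [incAt, if_pos rfl] at h3
      omega
  · intro e h1 h2
    rw [glt] at h1 h2
    by_cases he : e.1 j = x.1 j
    · apply h1.2
      funext i
      have h2i : e.1 i ≤ incAt x.1 j i := h2.1 i
      have h1i := h1.1 i
      simp only [incAt] at h2i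
      by_cases hij : i = j
      · rw [hij, he]
      · rw [if_neg hij] at h2i; omega
    · apply h2.2
      show e.1 = incAt x.1 j
      funext i
      have h2i : e.1 i ≤ incAt x.1 j i := h2.1 i
      have h1i := h1.1 i
      simp only [incAt] at h2i
      show e.1 i = incAt x.1 j i
      simp only [incAt]
      by_cases hij : i = j
      · subst hij
        rw [if_pos rfl]
        rw [if_pos rfl] at h2i
        omega
      · rw [if_neg hij]
        rw [if_neg hij] at h2i
        omega

/-- every cover is an `incAt`. -/
lemma cover_structure {x c : GammaSet n d} (h : x ⋖ c) :
    ∃ j, canInc n x.1 j ∧ c.1 = incAt x.1 j := by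
  have hlt := glt.1 h.1
  have hle := hlt.1
  have hS : (Finset.univ.filter (fun i : Fin d => x.1 i < c.1 i)).Nonempty := by
    by_contra hempty
    apply hlt.2
    funext i
    have : i ∉ Finset.univ.filter (fun i : Fin d => x.1 i < c.1 i) := by
      intro hi; exact hempty ⟨i, hi⟩
    simp only [Finset.mem_filter, Finset.mem_univ, true_and, not_lt] at this
    have := hle i
    omega
  obtain ⟨j, hjmem, hjmax⟩ :
      ∃ j ∈ Finset.univ.filter (fun i : Fin d => x.1 i < c.1 i),
        ∀ i ∈ Finset.univ.filter (fun i : Fin d => x.1 i < c.1 i), i ≤ j :=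
    ⟨_ , Finset.max'_mem _ hS, fun i hi => Finset.le_max' _ i hi⟩
  have hj : x.1 j < c.1 j := by
    simpa using hjmem
  have hjm : ∀ i, (j : Fin d) < i → c.1 i = x.1 i := by
    intro i hi
    by_cases hni : x.1 i < c.1 i
    · exact absurd (hjmax i (by simpa using hni)) (not_le.2 hi)
    · have := hle i
      omega
  have hc : canInc n x.1 j := by
    rw [canInc]
    by_cases hd1 : (j : ℕ) + 1 < d
    · rw [dif_pos hd1]
      have h1 : c.1 j < c.1 ⟨(j : ℕ) + 1, hd1⟩ := c.2.1 (by simp [Fin.lt_def])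
      have h2 : c.1 ⟨(j : ℕ) + 1, hd1⟩ = x.1 ⟨(j : ℕ) + 1, hd1⟩ :=
        hjm _ (by simp [Fin.lt_def])
      omega
    · rw [dif_neg hd1]
      have := (c.2.2 j).2
      omega
  refine ⟨j, hc, ?_⟩
  set b : GammaSet n d := ⟨incAt x.1 j, incAt_prop x.1 x.2 hc⟩ with hbdef
  have hxb : x ⋖ b := covby_incAt x hc
  have hbc : b ≤ c := by
    rw [gle]
    intro i
    show incAt x.1 j i ≤ c.1 i
    rw [incAt]
    split
    · next hij => rw [hij]; omega
    · exact hle i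
  have : b = c := by
    by_contra hne
    exact h.2 hxb.1 (lt_of_le_of_ne hbc hne)
  rw [← this]

/-- if no index can be incremented, we are at the top. -/
lemma eq_top_of_no_canInc (hd : 1 ≤ d) (hdn : d ≤ n) (a : Fin d → ℕ)
    (ha : StrictMono a ∧ ∀ i, 1 ≤ a i ∧ a i ≤ n)
    (h : ∀ j, ¬ canInc n a j) : a = fun j : Fin d => n - d + 1 + (j : ℕ) := by
  obtain ⟨hsm, hb⟩ := ha
  have key : ∀ k, k < d → a ⟨d - 1 - k, by omega⟩ = n - k := by
    intro k
    induction k with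
    | zero =>
      intro _
      have h0 := h ⟨d - 1, by omega⟩
      rw [canInc, dif_neg (by show ¬(d - 1 + 1 < d); omega)] at h0
      have := (hb ⟨d - 1, by omega⟩).2
      simp only [not_lt] at h0
      simp only [Nat.sub_zero]
      omega
    | succ k ih =>
      intro hk
      have hk' : k < d := by omega
      have ihk := ih hk'
      have h0 := h ⟨d - 1 - (k + 1), by omega⟩
      rw [canInc, dif_pos (by show d - 1 - (k + 1) + 1 < d; omega)] at h0
      simp only [not_lt] at h0
      have hidx : (⟨(d - 1 - (k + 1) : ℕ) + 1, by omega⟩ : Fin d) = ⟨d - 1 - k, by omega⟩ := by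
        apply Fin.ext; show d - 1 - (k + 1) + 1 = d - 1 - k; omega
      rw [hidx] at h0
      have hmono : a ⟨d - 1 - (k + 1), by omega⟩ < a ⟨d - 1 - k, by omega⟩ :=
        hsm (by rw [Fin.lt_def]; show d - 1 - (k + 1) < d - 1 - k; omega)
      have h1 := (hb ⟨d - 1 - (k + 1), by omega⟩).1
      have h2 := (hb ⟨d - 1 - k, by omega⟩).2
      omega
  funext i
  have hi := i.2
  have := key (d - 1 - (i : ℕ)) (by omega)
  have hidx : (⟨d - 1 - (d - 1 - (i : ℕ)), by omega⟩ : Fin d) = i := by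
    apply Fin.ext; show d - 1 - (d - 1 - (i : ℕ)) = (i : ℕ); omega
  rw [hidx] at this
  show a i = n - d + 1 + (i : ℕ)
  omega

/-- the join of the covers is `jstep`. -/
lemma lub_jstep (hd : 1 ≤ d) (hdn : d ≤ n) (x : GammaSet n d)
    (hnt : x.1 ≠ fun j : Fin d => n - d + 1 + (j : ℕ)) :
    IsLUB {δ : GammaSet n d | x ⋖ δ} ⟨jstep n x.1, jstep_prop x.1 x.2⟩ := by
  have hex : ∃ j, canInc n x.1 j := by
    by_contra hno
    push_neg at hno
    exact hnt (eq_top_of_no_canInc hd hdn x.1 x.2 hno)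
  constructor
  · intro c hc
    obtain ⟨j, hcj, hceq⟩ := cover_structure hc
    rw [gle]
    intro i
    show c.1 i ≤ jstep n x.1 i
    rw [hceq]
    exact incAt_le_jstep x.1 hcj i
  · intro u hu
    obtain ⟨j0, hj0⟩ := hex
    have h0 : (⟨incAt x.1 j0, incAt_prop x.1 x.2 hj0⟩ : GammaSet n d) ≤ u :=
      hu (covby_incAt x hj0)
    rw [gle] at h0 ⊢
    intro i
    show jstep n x.1 i ≤ u.1 i
    by_cases hc : canInc n x.1 i
    · have h1 : (⟨incAt x.1 i, incAt_prop x.1 x.2 hc⟩ : GammaSet n d) ≤ u :=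
        hu (covby_incAt x hc)
      rw [gle] at h1
      have hvi : incAt x.1 i i ≤ u.1 i := h1 i
      simp only [incAt, if_pos rfl] at hvi
      show (if canInc n x.1 i then x.1 i + 1 else x.1 i) ≤ u.1 i
      rw [if_pos hc]
      exact hvi
    · show (if canInc n x.1 i then x.1 i + 1 else x.1 i) ≤ u.1 i
      rw [if_neg hc]
      have hvi : incAt x.1 j0 i ≤ u.1 i := h0 i
      simp only [incAt] at hvi
      split at hvi
      · next h => rw [h] at *; omega
      · exact hvi

end Stmt16

namespace Stmt16

variable {n d : ℕ}

lemma twist_jstep (hd : 1 ≤ d) (hdn : d ≤ n) (a : Fin d → ℕ)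
    (ha : StrictMono a ∧ ∀ i, 1 ≤ a i ∧ a i ≤ n) :
    twist n d (jstep n a) = stepFn d (twist n d a) := by
  obtain ⟨hsm, hb⟩ := ha
  funext i
  have hrev : (i.rev : ℕ) = d - ((i : ℕ) + 1) := rfl
  have hb1 := hb i.rev
  have hi2 := i.2
  show n + 1 - (if canInc n a i.rev then a i.rev + 1 else a i.rev) =
    if ((i : ℕ) = 0 ∧ 1 < n + 1 - a i.rev) ∨
      (0 < (i : ℕ) ∧ n + 1 - a (⟨(i : ℕ) - 1, by omega⟩ : Fin d).rev + 1 < n + 1 - a i.rev)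
    then n + 1 - a i.rev - 1 else n + 1 - a i.rev
  by_cases hi0 : (i : ℕ) = 0
  · have hcan : canInc n a i.rev ↔ a i.rev < n := by
      rw [canInc, dif_neg (by omega)]
    by_cases hc : canInc n a i.rev
    · have hc' := hcan.1 hc
      rw [if_pos hc, if_pos (Or.inl ⟨hi0, by omega⟩)]
      omega
    · have hc' : ¬ a i.rev < n := fun h => hc (hcan.2 h)
      rw [if_neg hc]
      rw [if_neg]
      rintro (⟨h1, h2⟩ | ⟨h1, h2⟩)
      · omega
      · omega
  · have hpf : (i : ℕ) - 1 < d := by omega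
    have hrev2 : (((⟨(i : ℕ) - 1, hpf⟩ : Fin d)).rev : ℕ) = d - ((i : ℕ) - 1 + 1) := rfl
    have hlt : (i.rev : ℕ) + 1 < d := by omega
    have hidx : (⟨(i.rev : ℕ) + 1, hlt⟩ : Fin d) = (⟨(i : ℕ) - 1, hpf⟩ : Fin d).rev := by
      apply Fin.ext
      show (i.rev : ℕ) + 1 = _
      omega
    have hcan : canInc n a i.rev ↔ a i.rev + 1 < a ((⟨(i : ℕ) - 1, hpf⟩ : Fin d).rev) := by
      rw [canInc, dif_pos hlt, hidx]
    have hbr := hb ((⟨(i : ℕ) - 1, hpf⟩ : Fin d).rev)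
    by_cases hc : canInc n a i.rev
    · have hc' := hcan.1 hc
      rw [if_pos hc, if_pos (Or.inr ⟨by omega, by omega⟩)]
      omega
    · have hc' : ¬ a i.rev + 1 < a ((⟨(i : ℕ) - 1, hpf⟩ : Fin d).rev) :=
        fun h => hc (hcan.2 h)
      rw [if_neg hc, if_neg]
      rintro (⟨h1, h2⟩ | ⟨h1, h2⟩)
      · omega
      · omega

lemma twist_top (hd : 1 ≤ d) (hdn : d ≤ n) :
    twist n d (fun j : Fin d => n - d + 1 + (j : ℕ)) = fun i : Fin d => (i : ℕ) + 1 := by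
  funext i
  show n + 1 - (n - d + 1 + ((i.rev : ℕ))) = (i : ℕ) + 1
  have hrev : (i.rev : ℕ) = d - ((i : ℕ) + 1) := rfl
  have := i.2
  omega

lemma untwist (hd : 1 ≤ d) (hdn : d ≤ n) (a : Fin d → ℕ)
    (ha : StrictMono a ∧ ∀ i, 1 ≤ a i ∧ a i ≤ n)
    (h : twist n d a = fun i : Fin d => (i : ℕ) + 1) :
    a = fun j : Fin d => n - d + 1 + (j : ℕ) := by
  funext j
  have hj := congrFun h j.rev
  simp only [twist, Fin.rev_rev] at hj
  have hb := ha.2 j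
  have hrev : (j.rev : ℕ) = d - ((j : ℕ) + 1) := rfl
  have := j.2
  show a j = n - d + 1 + (j : ℕ)
  omega

end Stmt16

/-- The twist of the principal chain `ξ_1, ..., ξ_m` of `Γ(γ)` (with `ξ_1 = γ`, each
`ξ_{i+1}` the join of all covers of `ξ_i`, and `ξ_m = [n-d+1,...,n]` the maximum) is the
chain obtained by iterating the step function starting from `γ̃` and ending at
`[1,2,...,d]`; in particular `m = τ(γ̃)`, i.e. `m - 1` is the minimal number of
iterations of `step` taking `γ̃` to `[1,...,d]`. -/
theorem stmt_16 (n d : ℕ) (hd : 1 ≤ d) (hdn : d ≤ n)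
    (γ : GammaSet n d) (m : ℕ) (hm : 1 ≤ m)
    (ξ : ℕ → GammaSet n d)
    (hξ0 : ξ 0 = γ)
    (hξtop : (ξ (m - 1)).1 = fun i : Fin d => n - d + 1 + (i : ℕ))
    (hξmid : ∀ i, i + 1 < m → (ξ i).1 ≠ fun j : Fin d => n - d + 1 + (j : ℕ))
    (hξstep : ∀ i, i + 1 < m → IsLUB {δ : GammaSet n d | ξ i ⋖ δ} (ξ (i + 1))) :
    (∀ i < m, twist n d (ξ i).1 = (stepFn d)^[i] (twist n d γ.1)) ∧
      (stepFn d)^[m - 1] (twist n d γ.1) = (fun i : Fin d => (i : ℕ) + 1) ∧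
      (∀ l, (stepFn d)^[l] (twist n d γ.1) = (fun i : Fin d => (i : ℕ) + 1) → m - 1 ≤ l) := by
  have keyA : ∀ i, i < m → twist n d (ξ i).1 = (stepFn d)^[i] (twist n d γ.1) := by
    intro i
    induction i with
    | zero =>
      intro _
      rw [hξ0, Function.iterate_zero_apply]
    | succ i ih =>
      intro him
      have hmid := hξmid i him
      have hlub := Stmt16.lub_jstep hd hdn (ξ i) hmid
      have heq : ξ (i + 1) = ⟨Stmt16.jstep n (ξ i).1, Stmt16.jstep_prop (ξ i).1 (ξ i).2⟩ :=
        (hξstep i him).unique hlub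
      rw [heq]
      show twist n d (Stmt16.jstep n (ξ i).1) = _
      rw [Stmt16.twist_jstep hd hdn (ξ i).1 (ξ i).2, ih (by omega)]
      exact (Function.iterate_succ_apply' _ _ _).symm
  refine ⟨keyA, ?_, ?_⟩
  · have h1 : m - 1 < m := by omega
    have h2 := keyA (m - 1) h1
    rw [hξtop, Stmt16.twist_top hd hdn] at h2
    exact h2.symm
  · intro l hl
    by_contra hcon
    push_neg at hcon
    have hlm : l < m := by omega
    have h2 := keyA l hlm
    rw [hl] at h2
    exact hξmid l (by omega) (Stmt16.untwist hd hdn (ξ l).1 (ξ l).2 h2)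
end

section
/- Let γ = [a_1,...,a_d] with 1 ≤ a_1 < ... < a_d ≤ n and γ ≠ [n-d+1,...,n]. The length m of the principal chain of the distributive lattice Γ(γ) = {δ ≥ γ} (formed by repeatedly joining all covers, starting at γ and ending at [n-d+1,...,n]) equals max{Σ_{j=0}^{i}|β_j| + Σ_{j=i}^{t}|χ_j| : 0 ≤ i ≤ t}, where [β_0,...,β_s] is the block decomposition of γ into maximal runs of consecutive integers, χ_0,...,χ_t are the gaps, and t = s if a_d < n, t = s-1 if a_d = n. -/
namespace Stmt17

variable {n d : ℕ}

def Pgood (n : ℕ) {d : ℕ} (f : Fin d → ℕ) : Prop :=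
  StrictMono f ∧ ∀ i, 1 ≤ f i ∧ f i ≤ n

def topF (n d : ℕ) : Fin d → ℕ := fun j => n - d + 1 + (j : ℕ)

def nextF (n : ℕ) {d : ℕ} (f : Fin d → ℕ) : Fin d → ℕ := fun j =>
  if h : (j : ℕ) + 1 < d then min (f j + 1) (f ⟨(j : ℕ) + 1, h⟩ - 1)
  else min (f j + 1) n

lemma strictMono_of_adj (g : Fin d → ℕ)
    (h : ∀ (jv : ℕ) (hj : jv + 1 < d), g ⟨jv, Nat.lt_of_succ_lt hj⟩ < g ⟨jv + 1, hj⟩) :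
    StrictMono g := by
  have key : ∀ (c : ℕ) (i j : Fin d), (j : ℕ) = (i : ℕ) + c + 1 → g i < g j := by
    intro c
    induction c with
    | zero =>
      intro i j hc
      have := h (i : ℕ) (by omega)
      have hi : (⟨(i : ℕ), Nat.lt_of_succ_lt (show (i:ℕ)+1 < d by omega)⟩ : Fin d) = i :=
        Fin.ext rfl
      have hj : (⟨(i : ℕ) + 1, show (i:ℕ)+1 < d by omega⟩ : Fin d) = j :=
        Fin.ext (by simp only [Fin.val_mk]; omega)
      rwa [hi, hj] at this
    | succ c ih =>
      intro i j hc
      have hjlt : (i : ℕ) + c + 1 < d := by omega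
      have h1 := ih i ⟨(i : ℕ) + c + 1, hjlt⟩ rfl
      have h2 := h ((i : ℕ) + c + 1) (by omega)
      have hj : (⟨(i : ℕ) + c + 1 + 1, show (i:ℕ)+c+1+1 < d by omega⟩ : Fin d) = j :=
        Fin.ext (by simp only [Fin.val_mk]; omega)
      rw [hj] at h2
      exact lt_trans h1 h2
  intro i j hij
  exact key ((j : ℕ) - (i : ℕ) - 1) i j (by have := Fin.lt_def.mp hij; omega)

lemma adj_le (f : Fin d → ℕ) (hf : StrictMono f) (j : Fin d) (h : (j : ℕ) + 1 < d) :
    f j + 1 ≤ f ⟨(j : ℕ) + 1, h⟩ := hf (by simp [Fin.lt_def])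

/-- gap lemma: f i + j ≤ f j + i for i ≤ j -/
lemma gap_le (f : Fin d → ℕ) (hf : StrictMono f) (i j : Fin d) (hij : (i : ℕ) ≤ (j : ℕ)) :
    f i + (j : ℕ) ≤ f j + (i : ℕ) := by
  have key : ∀ (c : ℕ) (i j : Fin d), (j : ℕ) = (i : ℕ) + c → f i + (j : ℕ) ≤ f j + (i : ℕ) := by
    intro c
    induction c with
    | zero =>
      intro i j hc
      have : i = j := Fin.ext (by omega)
      subst this; omega
    | succ c ih =>
      intro i j hc
      have hjlt : (i : ℕ) + c < d := by omega
      have h1 := ih i ⟨(i : ℕ) + c, hjlt⟩ rfl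
      have h2 : f ⟨(i : ℕ) + c, hjlt⟩ < f j := hf (by rw [Fin.lt_def]; simp only [Fin.val_mk]; omega)
      simp only [Fin.val_mk] at h1
      omega
  exact key ((j : ℕ) - (i : ℕ)) i j (by omega)

/-- ceiling: f j + d ≤ n + 1 + j -/
lemma ceil_le (f : Fin d → ℕ) (hf : Pgood n f) (hd : 1 ≤ d) (j : Fin d) :
    f j + d ≤ n + 1 + (j : ℕ) := by
  have hlast : (d - 1 : ℕ) < d := by omega
  have h1 := gap_le f hf.1 j ⟨d - 1, hlast⟩ (by simp only [Fin.val_mk]; omega)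
  have h2 := (hf.2 ⟨d - 1, hlast⟩).2
  simp only [Fin.val_mk] at h1
  omega

lemma le_ceil (f : Fin d → ℕ) (hf : Pgood n f) (hd : 1 ≤ d) (hdn : d ≤ n) (j : Fin d) :
    f j ≤ n - d + 1 + (j : ℕ) := by
  have := ceil_le f hf hd j; omega

/-- top propagation: if f j hits the ceiling, everything above does -/
lemma top_propagate (f : Fin d → ℕ) (hf : Pgood n f) (hd : 1 ≤ d) (hdn : d ≤ n)
    (j : Fin d) (hj : f j = n - d + 1 + (j : ℕ)) (j' : Fin d) (hjj' : (j : ℕ) ≤ (j' : ℕ)) :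
    f j' = n - d + 1 + (j' : ℕ) := by
  have h1 := gap_le f hf.1 j j' hjj'
  have h2 := le_ceil f hf hd hdn j'
  omega

lemma eq_top_iff (f : Fin d → ℕ) (hf : Pgood n f) (hd : 1 ≤ d) (hdn : d ≤ n) :
    f = topF n d ↔ ∀ j : Fin d, ¬ f j < n - d + 1 + (j : ℕ) := by
  constructor
  · intro h j; rw [h]; simp [topF]
  · intro h
    funext j
    have := le_ceil f hf hd hdn j
    have := h j
    simp only [topF]
    omega

lemma le_nextF (f : Fin d → ℕ) (hf : Pgood n f) (j : Fin d) : f j ≤ nextF n f j := by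
  unfold nextF
  split
  · rename_i h
    have := adj_le f hf.1 j h
    simp; omega
  · have := (hf.2 j).2
    simp; omega

lemma nextF_le_succ (f : Fin d → ℕ) (j : Fin d) : nextF n f j ≤ f j + 1 := by
  unfold nextF; split <;> simp

lemma nextF_dichotomy (f : Fin d → ℕ) (hf : Pgood n f) (j : Fin d) :
    nextF n f j = f j ∨ nextF n f j = f j + 1 := by
  have h1 := le_nextF f hf j
  have h2 := nextF_le_succ (n := n) f j
  omega

/-- if blocked and not last, the next entry is adjacent -/
lemma blocked_adj (f : Fin d → ℕ) (hf : Pgood n f) (j : Fin d) (h : (j : ℕ) + 1 < d)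
    (hb : nextF n f j = f j) : f ⟨(j : ℕ) + 1, h⟩ = f j + 1 := by
  have := adj_le f hf.1 j h
  unfold nextF at hb
  rw [dif_pos h] at hb
  omega

/-- if blocked and last, f j = n -/
lemma blocked_last (f : Fin d → ℕ) (hf : Pgood n f) (j : Fin d) (h : ¬ ((j : ℕ) + 1 < d))
    (hb : nextF n f j = f j) : f j = n := by
  have := (hf.2 j).2
  unfold nextF at hb
  rw [dif_neg h] at hb
  omega

lemma Pgood_nextF (f : Fin d → ℕ) (hf : Pgood n f) : Pgood n (nextF n f) := by
  constructor
  · apply strictMono_of_adj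
    intro jv hj
    set j : Fin d := ⟨jv, Nat.lt_of_succ_lt hj⟩
    set j' : Fin d := ⟨jv + 1, hj⟩
    have hadj : f j + 1 ≤ f j' := adj_le f hf.1 j (by exact hj)
    have h1 : nextF n f j ≤ f j' - 1 := by
      unfold nextF
      rw [dif_pos (show (j : ℕ) + 1 < d from hj)]
      exact min_le_right _ _
    have h2 : f j' ≤ nextF n f j' := le_nextF f hf j'
    have : 1 ≤ f j' := (hf.2 j').1
    omega
  · intro j
    have h1 := le_nextF f hf j
    have h2 := (hf.2 j).1
    constructor
    · omega
    · unfold nextF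
      split
      · rename_i h
        have := adj_le f hf.1 j h
        have := (hf.2 ⟨(j:ℕ)+1, h⟩).2
        simp; omega
      · simp

/-- if moved and not last, there was room -/
lemma moved_lt (f : Fin d → ℕ) (hf : Pgood n f) (j : Fin d) (h : (j : ℕ) + 1 < d)
    (hmov : nextF n f j = f j + 1) : f j + 1 < f ⟨(j : ℕ) + 1, h⟩ := by
  unfold nextF at hmov
  rw [dif_pos h] at hmov
  have h1 : 1 ≤ f ⟨(j : ℕ) + 1, h⟩ := (hf.2 _).1
  have h2 : min (f j + 1) (f ⟨(j : ℕ) + 1, h⟩ - 1) ≤ f ⟨(j : ℕ) + 1, h⟩ - 1 :=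
    min_le_right _ _
  omega

/-- if moved and last, f j < n -/
lemma moved_lt_last (f : Fin d → ℕ) (hf : Pgood n f) (j : Fin d) (h : ¬ ((j : ℕ) + 1 < d))
    (hmov : nextF n f j = f j + 1) : f j < n := by
  unfold nextF at hmov
  rw [dif_neg h] at hmov
  have h2 : min (f j + 1) n ≤ n := min_le_right _ _
  omega

/-- single increment -/
lemma bump_mem (f : Fin d → ℕ) (hf : Pgood n f) (j : Fin d)
    (hmov : nextF n f j = f j + 1) :
    Pgood n (Function.update f j (f j + 1)) := by
  have hub : f j + 1 ≤ nextF n f j := le_of_eq hmov.symm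
  constructor
  · apply strictMono_of_adj
    intro jv hj
    set i : Fin d := ⟨jv, Nat.lt_of_succ_lt hj⟩
    set i' : Fin d := ⟨jv + 1, hj⟩
    have hii' : i ≠ i' := by simp [i, i', Fin.ext_iff]
    have hadj : f i + 1 ≤ f i' := adj_le f hf.1 i (by exact hj)
    rcases eq_or_ne i j with rfl | hij
    · -- updating at i
      rw [Function.update_self, Function.update_of_ne (Ne.symm hii')]
      exact moved_lt f hf i hj hmov
    · rw [Function.update_of_ne hij]
      rcases eq_or_ne i' j with rfl | hij'
      · rw [Function.update_self]; omega
      · rw [Function.update_of_ne hij']; omega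
  · intro i
    rcases eq_or_ne i j with rfl | hij
    · rw [Function.update_self]
      refine ⟨by omega, ?_⟩
      have h2 : nextF n f i ≤ n := (Pgood_nextF f hf).2 i |>.2
      omega
    · rw [Function.update_of_ne hij]; exact hf.2 i

lemma gs_le_iff (a b : GammaSet n d) : a ≤ b ↔ ∀ j, a.1 j ≤ b.1 j := Iff.rfl

lemma gs_lt_iff (a b : GammaSet n d) : a < b ↔ a ≤ b ∧ a ≠ b := lt_iff_le_and_ne

lemma movable_exists (hd : 1 ≤ d) (hdn : d ≤ n) (f : Fin d → ℕ) (hf : Pgood n f)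
    (hne : f ≠ topF n d) : ∃ j, nextF n f j = f j + 1 := by
  have hex : ∃ j : Fin d, f j < n - d + 1 + (j : ℕ) := by
    by_contra h
    push_neg at h
    exact hne ((eq_top_iff f hf hd hdn).mpr (fun j => by have := h j; omega))
  set SS := Finset.univ.filter (fun j : Fin d => f j < n - d + 1 + (j : ℕ)) with hSS
  have hSSne : SS.Nonempty := by
    obtain ⟨j, hj⟩ := hex
    exact ⟨j, by simp [hSS, hj]⟩
  set jm := SS.max' hSSne with hjm
  have hjmem : jm ∈ SS := SS.max'_mem hSSne
  have hjlt : f jm < n - d + 1 + (jm : ℕ) := by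
    simpa [hSS] using hjmem
  refine ⟨jm, ?_⟩
  unfold nextF
  split
  · rename_i h
    -- jm + 1 < d : the successor is at the ceiling by maximality
    have hnotmem : (⟨(jm : ℕ) + 1, h⟩ : Fin d) ∉ SS := by
      intro hmem
      have := SS.le_max' _ hmem
      rw [← hjm] at this
      have := Fin.le_def.mp this
      simp only [Fin.val_mk] at this
      omega
    have hceil := le_ceil f hf hd hdn ⟨(jm : ℕ) + 1, h⟩
    simp only [Fin.val_mk] at hceil
    have heq : f ⟨(jm : ℕ) + 1, h⟩ = n - d + 1 + ((jm : ℕ) + 1) := by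
      simp only [hSS, Finset.mem_filter, Finset.mem_univ, true_and, Fin.val_mk] at hnotmem
      omega
    rw [heq]
    exact min_eq_left (by omega)
  · rename_i h
    have hlt : f jm < n := by
      have : (jm : ℕ) = d - 1 := by have := jm.2; omega
      omega
    exact min_eq_left (by omega)

lemma bump_covby (f : Fin d → ℕ) (hf : Pgood n f) (j : Fin d)
    (hmov : nextF n f j = f j + 1) :
    (⟨f, hf⟩ : GammaSet n d) ⋖ ⟨Function.update f j (f j + 1), bump_mem f hf j hmov⟩ := by
  constructor
  · rw [gs_lt_iff]
    constructor
    · intro ℓ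
      rcases eq_or_ne ℓ j with rfl | hne
      · simp
      · simp [Function.update_of_ne hne]
    · intro hcon
      have := congrFun (congrArg Subtype.val hcon) j
      simp at this
  · intro c hc1 hc2
    have hle1 : ∀ ℓ, f ℓ ≤ c.1 ℓ := hc1.le
    have hle2 : ∀ ℓ, c.1 ℓ ≤ Function.update f j (f j + 1) ℓ := hc2.le
    rcases eq_or_ne (c.1 j) (f j) with hj | hj
    · have hcf : c = ⟨f, hf⟩ := by
        apply Subtype.ext; funext ℓ
        rcases eq_or_ne ℓ j with rfl | hne
        · exact hj
        · have h2 := hle2 ℓ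
          rw [Function.update_of_ne hne] at h2
          exact le_antisymm h2 (hle1 ℓ)
      exact hc1.ne hcf.symm
    · have hcb : c = ⟨Function.update f j (f j + 1), bump_mem f hf j hmov⟩ := by
        apply Subtype.ext; funext ℓ
        show c.1 ℓ = Function.update f j (f j + 1) ℓ
        rcases eq_or_ne ℓ j with rfl | hne
        · have h1 := hle1 ℓ
          have h2 := hle2 ℓ
          rw [Function.update_self] at h2 ⊢
          omega
        · have h2 := hle2 ℓ
          rw [Function.update_of_ne hne] at h2 ⊢
          exact le_antisymm h2 (hle1 ℓ)
      exact hc2.ne hcb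

lemma covers_le_nextF (hd : 1 ≤ d) (hdn : d ≤ n) (f : Fin d → ℕ) (hf : Pgood n f)
    (δ' : GammaSet n d) (hcov : (⟨f, hf⟩ : GammaSet n d) ⋖ δ') :
    δ' ≤ ⟨nextF n f, Pgood_nextF f hf⟩ := by
  have hglt : ∀ j, f j ≤ δ'.1 j := hcov.1.le
  have hz : Pgood n (fun j => min (δ'.1 j) (nextF n f j)) := by
    constructor
    · intro i j hij
      have h1 : δ'.1 i < δ'.1 j := δ'.2.1 hij
      have h2 : nextF n f i < nextF n f j := (Pgood_nextF f hf).1 hij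
      show min (δ'.1 i) (nextF n f i) < min (δ'.1 j) (nextF n f j)
      rcases min_cases (δ'.1 j) (nextF n f j) with ⟨hm, _⟩ | ⟨hm, _⟩ <;> rw [hm]
      · exact lt_of_le_of_lt (min_le_left _ _) h1
      · exact lt_of_le_of_lt (min_le_right _ _) h2
    · intro i
      exact ⟨le_min (δ'.2.2 i).1 ((Pgood_nextF f hf).2 i).1,
        le_trans (min_le_left _ _) (δ'.2.2 i).2⟩
  set z : GammaSet n d := ⟨fun j => min (δ'.1 j) (nextF n f j), hz⟩ with hzdef
  have hz1 : (⟨f, hf⟩ : GammaSet n d) ≤ z := by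
    intro j
    exact le_min (hglt j) (le_nextF f hf j)
  have hz2 : z ≤ δ' := fun j => min_le_left _ _
  rcases eq_or_ne z δ' with heq | hne
  · intro j
    have h1 : min (δ'.1 j) (nextF n f j) = δ'.1 j :=
      congrFun (congrArg Subtype.val heq) j
    show δ'.1 j ≤ nextF n f j
    exact min_eq_left_iff.mp h1
  · have hzlt : z < δ' := lt_of_le_of_ne hz2 hne
    have hzeq : (⟨f, hf⟩ : GammaSet n d) = z := by
      by_contra hzne
      exact hcov.2 (lt_of_le_of_ne hz1 hzne) hzlt
    have hmin : ∀ j, min (δ'.1 j) (nextF n f j) = f j := by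
      intro j
      exact (congrFun (congrArg Subtype.val hzeq) j).symm
    exfalso
    obtain ⟨j0, hj0⟩ : ∃ j, f j < δ'.1 j := by
      by_contra h
      push_neg at h
      apply hcov.1.ne
      apply Subtype.ext
      funext j
      exact le_antisymm (hglt j) (h j)
    have step : ∀ j : Fin d, f j < δ'.1 j → ∀ h : (j : ℕ) + 1 < d,
        f ⟨(j : ℕ) + 1, h⟩ < δ'.1 ⟨(j : ℕ) + 1, h⟩ := by
      intro j hj h
      have hblocked : nextF n f j = f j := by
        have h3 := hmin j
        have h2 := le_nextF f hf j
        rcases min_cases (δ'.1 j) (nextF n f j) with ⟨hm, hle⟩ | ⟨hm, hle⟩ <;> omega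
      have hadj := blocked_adj f hf j h hblocked
      have h4 : δ'.1 j < δ'.1 ⟨(j : ℕ) + 1, h⟩ := δ'.2.1 (by rw [Fin.lt_def]; simp)
      omega
    have last : ∀ j : Fin d, f j < δ'.1 j → ¬ ((j : ℕ) + 1 < d) → False := by
      intro j hj h
      have hblocked : nextF n f j = f j := by
        have h3 := hmin j
        have h2 := le_nextF f hf j
        rcases min_cases (δ'.1 j) (nextF n f j) with ⟨hm, hle⟩ | ⟨hm, hle⟩ <;> omega
      have h5 := blocked_last f hf j h hblocked
      have h6 := (δ'.2.2 j).2
      omega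
    have key : ∀ c : ℕ, ∀ j : Fin d, f j < δ'.1 j → (j : ℕ) + c + 1 = d → False := by
      intro c
      induction c with
      | zero =>
        intro j hj hc
        exact last j hj (by omega)
      | succ c ih =>
        intro j hj hc
        have h : (j : ℕ) + 1 < d := by omega
        exact ih ⟨(j : ℕ) + 1, h⟩ (step j hj h) (by simp only [Fin.val_mk]; omega)
    exact key (d - 1 - (j0 : ℕ)) j0 hj0 (by have := j0.2; omega)

lemma isLUB_covers (hd : 1 ≤ d) (hdn : d ≤ n) (f : Fin d → ℕ) (hf : Pgood n f)
    (hne : f ≠ topF n d) :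
    IsLUB {δ' : GammaSet n d | (⟨f, hf⟩ : GammaSet n d) ⋖ δ'}
      ⟨nextF n f, Pgood_nextF f hf⟩ := by
  constructor
  · intro δ' hδ'
    exact covers_le_nextF hd hdn f hf δ' hδ'
  · intro u hu
    obtain ⟨jstar, hjstar⟩ := movable_exists hd hdn f hf hne
    have hδle : (⟨f, hf⟩ : GammaSet n d) ≤ u := by
      have hcov := bump_covby f hf jstar hjstar
      exact le_trans hcov.1.le (hu hcov)
    intro j
    show nextF n f j ≤ u.1 j
    rcases nextF_dichotomy f hf j with hb | hmv
    · rw [hb]; exact hδle j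
    · have hcov := bump_covby f hf j hmv
      have h1 : Function.update f j (f j + 1) j ≤ u.1 j := hu hcov j
      rw [Function.update_self] at h1
      omega

/-- the potential function -/
def MF (n : ℕ) {d : ℕ} (f : Fin d → ℕ) : ℕ :=
  (Finset.univ.filter (fun j : Fin d => f j < n - d + 1 + (j : ℕ))).sup
    (fun j => (n - d + 1 + (j : ℕ) - f j) + (j : ℕ))

lemma le_MF (f : Fin d → ℕ) (j : Fin d) (hj : f j < n - d + 1 + (j : ℕ)) :
    (n - d + 1 + (j : ℕ) - f j) + (j : ℕ) ≤ MF n f :=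
  Finset.le_sup (f := fun j : Fin d => (n - d + 1 + (j : ℕ) - f j) + (j : ℕ))
    (Finset.mem_filter.mpr ⟨Finset.mem_univ _, hj⟩)

lemma MF_top : MF n (topF n d) = 0 := by
  unfold MF
  have : (Finset.univ.filter (fun j : Fin d => topF n d j < n - d + 1 + (j : ℕ))) = ∅ := by
    apply Finset.filter_false_of_mem
    intro j _
    simp [topF]
  rw [this, Finset.sup_empty]
  rfl

lemma MF_pos (hd : 1 ≤ d) (hdn : d ≤ n) (f : Fin d → ℕ) (hf : Pgood n f)
    (hne : f ≠ topF n d) : 1 ≤ MF n f := by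
  obtain ⟨j, hj⟩ : ∃ j : Fin d, f j < n - d + 1 + (j : ℕ) := by
    by_contra h
    push_neg at h
    exact hne ((eq_top_iff f hf hd hdn).mpr (fun j => by have := h j; omega))
  calc 1 ≤ (n - d + 1 + (j : ℕ) - f j) + (j : ℕ) := by omega
  _ ≤ MF n f := le_MF f j hj

lemma MF_step (hd : 1 ≤ d) (hdn : d ≤ n) (f : Fin d → ℕ) (hf : Pgood n f)
    (hne : f ≠ topF n d) : MF n f = MF n (nextF n f) + 1 := by
  have hMpos := MF_pos hd hdn f hf hne
  apply le_antisymm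
  · -- MF f ≤ MF next + 1
    apply Finset.sup_le
    intro ℓ hℓ
    simp only [Finset.mem_filter, Finset.mem_univ, true_and] at hℓ
    by_cases hnl : nextF n f ℓ < n - d + 1 + (ℓ : ℕ)
    · have h1 : (n - d + 1 + (ℓ : ℕ) - nextF n f ℓ) + (ℓ : ℕ) ≤ MF n (nextF n f) :=
        le_MF (nextF n f) ℓ hnl
      have h2 := nextF_le_succ (n := n) f ℓ
      omega
    · -- nextF hit the ceiling at ℓ
      have hceil := le_ceil (nextF n f) (Pgood_nextF f hf) hd hdn ℓ
      have heq : nextF n f ℓ = n - d + 1 + (ℓ : ℕ) := by omega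
      have hmv : nextF n f ℓ = f ℓ + 1 := by
        rcases nextF_dichotomy f hf ℓ with h | h <;> omega
      have hvf : (n - d + 1 + (ℓ : ℕ) - f ℓ) + (ℓ : ℕ) = 1 + (ℓ : ℕ) := by omega
      rw [hvf]
      rcases Nat.eq_zero_or_pos (ℓ : ℕ) with h0 | h0
      · omega
      · -- use ℓ - 1
        have hl' : (ℓ : ℕ) - 1 + 1 < d := by have := ℓ.2; omega
        set ℓ' : Fin d := ⟨(ℓ : ℕ) - 1, by omega⟩ with hℓ'def
        have hsucc : (⟨(ℓ' : ℕ) + 1, hl'⟩ : Fin d) = ℓ := Fin.ext (by show (ℓ' : ℕ) + 1 = (ℓ : ℕ); have : (ℓ' : ℕ) = (ℓ : ℕ) - 1 := rfl; omega)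
        have hval : nextF n f ℓ' ≤ f ℓ - 1 := by
          unfold nextF
          rw [dif_pos (show (ℓ' : ℕ) + 1 < d from hl')]
          rw [hsucc]
          exact min_le_right _ _
        have h1ℓ : 1 ≤ f ℓ := (hf.2 ℓ).1
        have hmem : nextF n f ℓ' < n - d + 1 + (ℓ' : ℕ) := by
          have : (ℓ' : ℕ) = (ℓ : ℕ) - 1 := rfl
          omega
        have h1 : (n - d + 1 + (ℓ' : ℕ) - nextF n f ℓ') + (ℓ' : ℕ) ≤ MF n (nextF n f) :=
          le_MF (nextF n f) ℓ' hmem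
        have : (ℓ' : ℕ) = (ℓ : ℕ) - 1 := rfl
        omega
  · -- MF next + 1 ≤ MF f
    have hsle : MF n (nextF n f) ≤ MF n f - 1 := by
      apply Finset.sup_le
      intro ℓ hℓ
      simp only [Finset.mem_filter, Finset.mem_univ, true_and] at hℓ
      rcases nextF_dichotomy f hf ℓ with hb | hmv
      · -- blocked
        have hfl : f ℓ < n - d + 1 + (ℓ : ℕ) := by omega
        by_cases h : (ℓ : ℕ) + 1 < d
        · have hadj := blocked_adj f hf ℓ h hb
          have hmem : f ⟨(ℓ : ℕ) + 1, h⟩ < n - d + 1 + ((⟨(ℓ : ℕ) + 1, h⟩ : Fin d) : ℕ) := by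
            simp only [Fin.val_mk]
            omega
          have h1 : (n - d + 1 + ((⟨(ℓ : ℕ) + 1, h⟩ : Fin d) : ℕ) - f ⟨(ℓ : ℕ) + 1, h⟩)
              + ((⟨(ℓ : ℕ) + 1, h⟩ : Fin d) : ℕ) ≤ MF n f :=
            le_MF f ⟨(ℓ : ℕ) + 1, h⟩ hmem
          simp only [Fin.val_mk] at h1
          omega
        · have := blocked_last f hf ℓ h hb
          have : (ℓ : ℕ) = d - 1 := by have := ℓ.2; omega
          omega
      · -- moved
        have hfl : f ℓ < n - d + 1 + (ℓ : ℕ) := by omega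
        have h1 : (n - d + 1 + (ℓ : ℕ) - f ℓ) + (ℓ : ℕ) ≤ MF n f :=
          le_MF f ℓ hfl
        omega
    omega

/-- telescoping sum over Icc -/
lemma sum_tele (G : ℕ → ℤ) (c : ℕ → ℤ) : ∀ (b i : ℕ), i ≤ b + 1 →
    (∀ j, i ≤ j → j ≤ b → c j = G (j + 1) - G j) →
    ∑ j ∈ Finset.Icc i b, c j = G (b + 1) - G i := by
  intro b
  induction b with
  | zero =>
    intro i hi h
    rcases Nat.le_one_iff_eq_zero_or_eq_one.mp hi with rfl | rfl
    · rw [show Finset.Icc 0 0 = {0} from rfl, Finset.sum_singleton, h 0 le_rfl le_rfl]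
    · rw [show Finset.Icc 1 0 = ∅ by rfl, Finset.sum_empty]; ring
  | succ b ih =>
    intro i hi h
    rcases Nat.lt_or_ge i (b + 2) with hlt | hge
    · rcases Nat.lt_or_ge i (b + 1) with hlt' | hge'
      · rw [Finset.sum_Icc_succ_top (by omega : i ≤ b + 1)]
        rw [ih i (by omega) (fun j hj1 hj2 => h j hj1 (by omega))]
        rw [h (b + 1) (by omega) le_rfl]
        ring
      · have : i = b + 1 := by omega
        subst this
        rw [Finset.Icc_self, Finset.sum_singleton, h (b + 1) le_rfl le_rfl]
    · have : i = b + 2 := by omega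
      subst this
      rw [Finset.Icc_eq_empty (by omega), Finset.sum_empty]
      ring

end Stmt17

open Stmt17 in
/-- The length `m` of the principal chain of `Γ(γ)` (starting at the minimum `γ`, each
next element the join of all covers of the previous one, ending at the maximum
`[n-d+1,...,n]`) equals `max {Σ_{j=0}^{i}|β_j| + Σ_{j=i}^{t}|χ_j| : 0 ≤ i ≤ t}`, for the
block decomposition of `γ` into maximal runs of consecutive integers with gaps. -/
theorem stmt_17 (n d s t : ℕ) (hd : 1 ≤ d) (hdn : d ≤ n)
    -- γ is the strictly increasing tuple `a 0 < a 1 < ... < a (d-1)` (0-based indexing)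
    (a : ℕ → ℕ)
    (hmono : ∀ j, j + 1 < d → a j < a (j + 1))
    (hbd : ∀ j < d, 1 ≤ a j ∧ a j ≤ n)
    -- γ ≠ [n-d+1,...,n]
    (hne : ∃ j < d, a j ≠ n - d + 1 + j)
    -- block decomposition: block `i` (0 ≤ i ≤ s) occupies the 0-based indices
    -- `k i, k i + 1, ..., k (i+1) - 1`; its entries are consecutive integers, and
    -- consecutive blocks are separated by a nonempty gap
    (k : ℕ → ℕ) (hk0 : k 0 = 0) (hklast : k (s + 1) = d)
    (hkmono : ∀ i ≤ s, k i < k (i + 1))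
    (hblock : ∀ i ≤ s, ∀ j, k i ≤ j → j + 1 < k (i + 1) → a (j + 1) = a j + 1)
    (hgap : ∀ i < s, a (k (i + 1) - 1) + 1 < a (k (i + 1)))
    -- t = s if a_d < n, and t = s - 1 if a_d = n
    (ht : (a (d - 1) < n ∧ t = s) ∨ (a (d - 1) = n ∧ 1 ≤ s ∧ t = s - 1))
    -- gap sizes: |χ_i| for i < s, and the final gap |χ_s| = n - a_d
    (χ : ℕ → ℤ)
    (hχ : ∀ i < s, χ i = (a (k (i + 1)) : ℤ) - (a (k (i + 1) - 1) : ℤ) - 1)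
    (hχs : χ s = (n : ℤ) - (a (d - 1) : ℤ))
    -- block sizes |β_i| = k (i+1) - k i, and the numbers κ_i
    (β : ℕ → ℤ) (hβ : ∀ i, β i = (k (i + 1) : ℤ) - (k i : ℤ))
    (κ : ℕ → ℤ)
    (hκ : ∀ i, κ i = (∑ j ∈ Finset.Icc 0 i, β j) + ∑ j ∈ Finset.Icc i t, χ j)
    -- γ as an element of Γ, and its principal chain ξ_0, ..., ξ_{m-1}
    (γ : GammaSet n d) (hγ : γ.1 = fun i : Fin d => a (i : ℕ))
    (m : ℕ) (hm : 1 ≤ m)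
    (ξ : ℕ → GammaSet n d)
    (hξ0 : ξ 0 = γ)
    (hξtop : (ξ (m - 1)).1 = fun i : Fin d => n - d + 1 + (i : ℕ))
    (hξmid : ∀ i, i + 1 < m → (ξ i).1 ≠ fun j : Fin d => n - d + 1 + (j : ℕ))
    (hξstep : ∀ i, i + 1 < m → IsLUB {δ : GammaSet n d | ξ i ⋖ δ} (ξ (i + 1))) :
    (m : ℤ) = (Finset.Icc 0 t).sup' (Finset.nonempty_Icc.mpr (Nat.zero_le t)) κ := by
  -- ## Step 0 : basic facts about a and k
  have amono : ∀ c j, j + c < d → a j + c ≤ a (j + c) := by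
    intro c
    induction c with
    | zero => intro j _; show a j + 0 ≤ a j; omega
    | succ c ih =>
      intro j hj
      have h1 := ih j (by omega)
      have h2 := hmono (j + c) (by omega)
      show a j + (c + 1) ≤ a ((j + c) + 1)
      omega
  have haceil : ∀ j < d, a j + (d - 1 - j) ≤ n := by
    intro j hj
    have h1 := amono (d - 1 - j) j (by omega)
    have h2 := (hbd (d - 1) (by omega)).2
    rw [show j + (d - 1 - j) = d - 1 by omega] at h1
    omega
  have aceil2 : ∀ j < d, a (d - 1) < n → a j < n - d + 1 + j := by
    intro j hj hlt
    have h1 := amono (d - 1 - j) j (by omega)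
    rw [show j + (d - 1 - j) = d - 1 by omega] at h1
    omega
  have kmono : ∀ i i', i ≤ i' → i' ≤ s + 1 → k i ≤ k i' := by
    intro i i' hii' hi'
    obtain ⟨c, rfl⟩ : ∃ c, i' = i + c := ⟨i' - i, by omega⟩
    clear hii'
    induction c with
    | zero => show k i ≤ k i; omega
    | succ c ih =>
      have h1 := ih (by omega)
      have h2 := hkmono (i + c) (by omega)
      show k i ≤ k ((i + c) + 1)
      omega
  have kd : ∀ i, i ≤ s + 1 → k i ≤ d := by
    intro i hi
    have := kmono i (s + 1) hi le_rfl
    omega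
  have kpos : ∀ i ≤ s, 1 ≤ k (i + 1) := by
    intro i hi
    have h1 := hkmono i hi
    omega
  have block_add : ∀ i ≤ s, ∀ j c, k i ≤ j → j + c < k (i + 1) → a (j + c) = a j + c := by
    intro i hi j c
    induction c with
    | zero => intro _ _; show a j = a j + 0; omega
    | succ c ih =>
      intro h1 h2
      have h3 := ih h1 (by omega)
      have h4 := hblock i hi (j + c) (by omega) (by omega)
      show a ((j + c) + 1) = a j + (c + 1)
      omega
  have hts : t ≤ s := by rcases ht with ⟨_, h⟩ | ⟨_, _, h⟩ <;> omega
  -- ## Step 1 : the κ formula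
  set G : ℕ → ℤ := fun i => (a (k (i + 1) - 1) : ℤ) - (k (i + 1) : ℤ) with hG
  have hGs : G s = (a (d - 1) : ℤ) - (d : ℤ) := by
    simp only [hG, hklast]
  have hχtel : ∀ j, j < s → χ j = G (j + 1) - G j := by
    intro j hj
    have hk2 := hkmono (j + 1) (by omega)
    have hk1 := kpos j (by omega)
    have h2 : a (k (j + 1) + (k (j + 1 + 1) - 1 - k (j + 1)))
        = a (k (j + 1)) + (k (j + 1 + 1) - 1 - k (j + 1)) :=
      block_add (j + 1) (by omega) _ _ le_rfl (by omega)
    rw [show k (j + 1) + (k (j + 1 + 1) - 1 - k (j + 1)) = k (j + 1 + 1) - 1 by omega] at h2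
    simp only [hG]
    rw [hχ j hj, h2]
    push_cast
    omega
  have hχsum : ∀ i, i ≤ t → ∑ j ∈ Finset.Icc i t, χ j = (n : ℤ) - (d : ℤ) - G i := by
    intro i hi
    rcases ht with ⟨hlt, htseq⟩ | ⟨heq, hs1, htseq⟩
    · -- t = s
      rw [htseq] at hi ⊢
      set G' : ℕ → ℤ := fun j => if j ≤ s then G j else (n : ℤ) - (d : ℤ) with hG'
      have htel : ∀ j, i ≤ j → j ≤ s → χ j = G' (j + 1) - G' j := by
        intro j _ hj2
        rcases Nat.lt_or_ge j s with hj | hj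
        · simp only [hG', if_pos (show j + 1 ≤ s by omega), if_pos hj2]
          exact hχtel j hj
        · have hjs : j = s := by omega
          subst hjs
          simp only [hG', if_neg (show ¬ (j + 1 ≤ j) by omega), if_pos le_rfl]
          rw [hχs, hGs]
          ring
      rw [sum_tele G' χ s i (by omega) htel]
      simp only [hG', if_neg (show ¬ (s + 1 ≤ s) by omega), if_pos hi]
    · -- t = s - 1
      rw [htseq] at hi ⊢
      have htel : ∀ j, i ≤ j → j ≤ s - 1 → χ j = G (j + 1) - G j := by
        intro j _ hj2
        exact hχtel j (by omega)
      rw [sum_tele G χ (s - 1) i (by omega) htel]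
      rw [show s - 1 + 1 = s by omega, hGs, heq]
  have hβsum : ∀ i, ∑ j ∈ Finset.Icc 0 i, β j = (k (i + 1) : ℤ) := by
    intro i
    have htel : ∀ j, 0 ≤ j → j ≤ i → β j = (fun i => (k i : ℤ)) (j + 1) - (fun i => (k i : ℤ)) j := by
      intro j _ _
      simp [hβ j]
    rw [sum_tele (fun i => (k i : ℤ)) β i 0 (by omega) htel]
    simp [hk0]
  have hκ' : ∀ i, i ≤ t → κ i = (n : ℤ) - d + 2 * (k (i + 1) : ℤ) - (a (k (i + 1) - 1) : ℤ) := by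
    intro i hi
    rw [hκ i, hβsum i, hχsum i hi]
    simp only [hG]
    ring
  -- ## Step 2 : the chain gives m = MF γ.1 + 1
  have chain : ∀ i, i ≤ m - 1 → MF n γ.1 = MF n (ξ i).1 + i := by
    intro i
    induction i with
    | zero => intro _; rw [hξ0]; omega
    | succ i ih =>
      intro h
      have h2 : i + 1 < m := by omega
      have hnotop : (ξ i).1 ≠ topF n d := hξmid i h2
      have hlub2 := isLUB_covers hd hdn (ξ i).1 (ξ i).2 hnotop
      have hstep := (hξstep i h2).unique hlub2
      have hMFstep := MF_step hd hdn (ξ i).1 (ξ i).2 hnotop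
      have hval : (ξ (i + 1)).1 = nextF n (ξ i).1 := by rw [hstep]
      rw [ih (by omega), hval] at *
      omega
  have hMγ : MF n γ.1 = m - 1 := by
    have h1 := chain (m - 1) le_rfl
    have h2 : (ξ (m - 1)).1 = topF n d := hξtop
    rw [h2, MF_top] at h1
    omega
  -- ## Step 3 : find-block lemma
  have find_block : ∀ j, j < d → ∃ i, i ≤ s ∧ k i ≤ j ∧ j < k (i + 1) := by
    intro j hj
    set SS := (Finset.range (s + 2)).filter (fun i => k i ≤ j) with hSS
    have h0 : (0 : ℕ) ∈ SS := by simp [hSS, hk0]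
    have hSSne : SS.Nonempty := ⟨0, h0⟩
    set im := SS.max' hSSne with him
    have himem : im ∈ SS := SS.max'_mem hSSne
    simp only [hSS, Finset.mem_filter, Finset.mem_range] at himem
    have hims : im ≤ s := by
      rcases Nat.lt_or_ge im (s + 1) with h | h
      · omega
      · exfalso
        have h1 : im = s + 1 := by omega
        rw [h1, hklast] at himem
        omega
    refine ⟨im, hims, himem.2, ?_⟩
    by_contra hcon
    push_neg at hcon
    have hmem2 : im + 1 ∈ SS := by simp [hSS]; omega
    have := SS.le_max' _ hmem2
    omega
  -- ## Step 4 : conclude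
  have hmeq : (m : ℤ) = (MF n γ.1 : ℤ) + 1 := by omega
  rw [hmeq]
  have hγval : ∀ ℓ : Fin d, γ.1 ℓ = a (ℓ : ℕ) := fun ℓ => congrFun hγ ℓ
  apply le_antisymm
  · -- MF + 1 ≤ sup'
    obtain ⟨j0, hj0d, hj0⟩ := hne
    have hfilterne : (Finset.univ.filter
        (fun ℓ : Fin d => γ.1 ℓ < n - d + 1 + (ℓ : ℕ))).Nonempty := by
      refine ⟨⟨j0, hj0d⟩, ?_⟩
      simp only [Finset.mem_filter, Finset.mem_univ, true_and, hγval, Fin.val_mk]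
      have := haceil j0 hj0d
      omega
    obtain ⟨ℓ0, hℓ0mem, hℓ0⟩ := Finset.exists_mem_eq_sup _ hfilterne
      (fun j : Fin d => (n - d + 1 + (j : ℕ) - γ.1 j) + (j : ℕ))
    simp only [Finset.mem_filter, Finset.mem_univ, true_and] at hℓ0mem
    have hMF : MF n γ.1 = (n - d + 1 + (ℓ0 : ℕ) - γ.1 ℓ0) + (ℓ0 : ℕ) := hℓ0
    obtain ⟨i, his, hik1, hik2⟩ := find_block (ℓ0 : ℕ) ℓ0.2
    have hℓ0d : (ℓ0 : ℕ) < d := ℓ0.2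
    have hval0 : a (ℓ0 : ℕ) < n - d + 1 + (ℓ0 : ℕ) := by
      rw [hγval] at hℓ0mem; exact hℓ0mem
    have hit : i ≤ t := by
      rcases ht with ⟨hlt, htseq⟩ | ⟨heq, hs1, htseq⟩
      · omega
      · rcases Nat.lt_or_ge i s with h | h
        · omega
        · exfalso
          have hieq : i = s := by omega
          subst hieq
          have hb := block_add i le_rfl (ℓ0 : ℕ) (d - 1 - (ℓ0 : ℕ)) hik1
            (by rw [hklast]; omega)
          rw [show (ℓ0 : ℕ) + (d - 1 - (ℓ0 : ℕ)) = d - 1 by omega] at hb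
          omega
    have hend : a (k (i + 1) - 1) = a (ℓ0 : ℕ) + (k (i + 1) - 1 - (ℓ0 : ℕ)) := by
      have hb := block_add i his (ℓ0 : ℕ) (k (i + 1) - 1 - (ℓ0 : ℕ)) hik1 (by omega)
      rw [show (ℓ0 : ℕ) + (k (i + 1) - 1 - (ℓ0 : ℕ)) = k (i + 1) - 1 by omega] at hb
      exact hb
    have hκi := hκ' i hit
    have hsup : κ i ≤ (Finset.Icc 0 t).sup' (Finset.nonempty_Icc.mpr (Nat.zero_le t)) κ :=
      Finset.le_sup' κ (Finset.mem_Icc.mpr ⟨Nat.zero_le i, hit⟩)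
    have hγℓ0 : γ.1 ℓ0 = a (ℓ0 : ℕ) := hγval ℓ0
    have hk1pos := kpos i his
    have hkey : (MF n γ.1 : ℤ) + 1 ≤ κ i := by
      rw [hMF, hκi, hγℓ0]
      push_cast
      omega
    omega
  · -- sup' ≤ MF + 1
    apply Finset.sup'_le
    intro i hi
    rw [Finset.mem_Icc] at hi
    have hit : i ≤ t := hi.2
    have his : i ≤ s := by omega
    have hk1pos := kpos i his
    have hℓd : k (i + 1) - 1 < d := by
      have := kd (i + 1) (by omega)
      omega
    have hvalid : a (k (i + 1) - 1) < n - d + 1 + (k (i + 1) - 1) := by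
      rcases ht with ⟨hlt, htseq⟩ | ⟨heq, hs1, htseq⟩
      · exact aceil2 _ hℓd hlt
      · -- i < s, use the gap
        have hgapi := hgap i (by omega)
        have hki1d : k (i + 1) < d := by
          have h1 := kmono (i + 1) s (by omega) (by omega)
          have h2 := hkmono s le_rfl
          omega
        have h3 := haceil (k (i + 1)) hki1d
        omega
    have hκi := hκ' i hit
    have hle := le_MF (n := n) γ.1 ⟨k (i + 1) - 1, hℓd⟩ (by rw [hγval]; exact hvalid)
    rw [hγval] at hle
    simp only [Fin.val_mk] at hle
    rw [hκi]
    push_cast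
    omega
end
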